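/- Every shrewd cardinal is weakly shrewd. -/

import Mathlib

universe u

open Cardinal

/-- Formulas of the language of set theory with an additional unary predicate
symbol `pred`; variables are indexed by natural numbers. -/
inductive SF : Type
  | mem : ℕ → ℕ → SF
  | eq : ℕ → ℕ → SF
  | pred : ℕ → SF
  | not : SF → SF
  | and : SF → SF → SF
  | ex : ℕ → SF → SF

/-- The free variables of a formula. -/
def SF.fv : SF → Set ℕ
  | .mem i j => {i, j}
  | .eq i j => {i, j}
  | .pred i => {i}
  | .not φ => φ.fv
  | .and φ ψ => φ.fv ∪ ψ.fv
  | .ex k φ => φ.fv \ {k}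

/-- Tarskian satisfaction of a formula in the structure whose carrier is the
class `S`, where the membership symbol is interpreted by the binary relation `E`
and the extra unary predicate symbol by the class `P`, under the valuation `v`. -/
def Sat (P : Set ZFSet.{u}) (E : ZFSet.{u} → ZFSet.{u} → Prop) (S : Set ZFSet.{u}) :
    SF → (ℕ → ZFSet.{u}) → Prop
  | .mem i j, v => E (v i) (v j)
  | .eq i j, v => v i = v j
  | .pred i, v => v i ∈ P
  | .not φ, v => ¬ Sat P E S φ v
  | .and φ ψ, v => Sat P E S φ v ∧ Sat P E S ψ v
  | .ex k φ, v => ∃ x, x ∈ S ∧ Sat P E S φ (Function.update v k x)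

/-- Satisfaction in the `∈`-structure with carrier `S`, the predicate symbol
being interpreted by the class `R`. -/
def SatIn (R : Set ZFSet.{u}) (S : Set ZFSet.{u}) (φ : SF) (v : ℕ → ZFSet.{u}) : Prop :=
  Sat R (· ∈ ·) S φ v

/-- Δ₀-formulas: built from atomic formulas by propositional connectives and
bounded existential quantification. -/
inductive IsDeltaZero : SF → Prop
  | mem (i j) : IsDeltaZero (.mem i j)
  | eq (i j) : IsDeltaZero (.eq i j)
  | pred (i) : IsDeltaZero (.pred i)
  | not {φ} : IsDeltaZero φ → IsDeltaZero (.not φ)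
  | and {φ ψ} : IsDeltaZero φ → IsDeltaZero ψ → IsDeltaZero (.and φ ψ)
  | bex {φ} (k j) : IsDeltaZero φ → IsDeltaZero (.ex k (.and (.mem k j) φ))

mutual
  /-- Σₙ-formulas of the Lévy hierarchy. -/
  inductive IsSigma : ℕ → SF → Prop
    | of_zero {φ} : IsDeltaZero φ → IsSigma 0 φ
    | of_pi {n φ} : IsPi n φ → IsSigma (n + 1) φ
    | ex {n φ} (k) : IsSigma (n + 1) φ → IsSigma (n + 1) (.ex k φ)
  /-- Πₙ-formulas of the Lévy hierarchy. -/
  inductive IsPi : ℕ → SF → Prop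
    | of_zero {φ} : IsDeltaZero φ → IsPi 0 φ
    | not {n φ} : IsSigma (n + 1) φ → IsPi (n + 1) (.not φ)
end

/-- The valuation sending `v₀` to `a`, `v₁` to `b` and all other variables to `∅`. -/
def val2 (a b : ZFSet.{u}) : ℕ → ZFSet.{u} := fun i => if i = 0 then a else if i = 1 then b else ∅

/-- `x` is a (von Neumann) ordinal. -/
def ZOrd (x : ZFSet.{u}) : Prop := x.IsTransitive ∧ ∀ y ∈ x, ZFSet.IsTransitive y

/-- `κ` is a (von Neumann) cardinal. -/
def ZCard (κ : ZFSet.{u}) : Prop := ZOrd κ ∧ ∀ β ∈ κ, #β.toSet < #κ.toSet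

/-- `κ` is an infinite cardinal. -/
def InfCard (κ : ZFSet.{u}) : Prop := ZCard κ ∧ ZFSet.omega ⊆ κ

/-- `κ` is an infinite regular cardinal: every cofinal subset of `κ` has
cardinality `κ`. -/
def ZRegular (κ : ZFSet.{u}) : Prop :=
  InfCard κ ∧ ∀ x : ZFSet.{u}, x ⊆ κ →
    (∀ β ∈ κ, ∃ γ ∈ x, β ∈ γ ∨ β = γ) → #x.toSet = #κ.toSet

/-- `C` is a closed unbounded (class of) subset(s) of the ordinal `κ`. -/
def ZClub (C : Set ZFSet.{u}) (κ : ZFSet.{u}) : Prop :=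
  (∀ γ ∈ C, γ ∈ κ) ∧ (∀ β ∈ κ, ∃ γ ∈ C, β ∈ γ) ∧
    (∀ β ∈ κ, (∃ γ, γ ∈ β) → (∀ γ ∈ β, ∃ δ ∈ C, γ ∈ δ ∧ δ ∈ β) → β ∈ C)

/-- `S` is stationary in `κ`: it meets every closed unbounded subset of `κ`. -/
def ZStationary (S : Set ZFSet.{u}) (κ : ZFSet.{u}) : Prop :=
  ∀ C, ZClub C κ → ∃ γ ∈ C, γ ∈ S

/-- `H(θ)`: the class of all sets hereditarily of cardinality less than `θ`. -/
def HSet (θ : ZFSet.{u}) : Set ZFSet.{u} :=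
  {x | ∃ t : ZFSet.{u}, t.IsTransitive ∧ x ⊆ t ∧ #t.toSet < #θ.toSet}

/-- `θ` is the cardinal successor `κ⁺` of `κ`. -/
def SuccCardOf (θ κ : ZFSet.{u}) : Prop :=
  ZCard θ ∧ κ ∈ θ ∧ ∀ μ, ZCard μ → κ ∈ μ → θ ⊆ μ

/-- `κ` is a weakly shrewd cardinal. -/
def WeaklyShrewd (κ : ZFSet.{u}) : Prop :=
  InfCard κ ∧
    ∀ (φ : SF) (θ A : ZFSet.{u}), φ.fv ⊆ {0, 1} → ZCard θ → κ ∈ θ → A ⊆ κ →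
      SatIn ∅ (HSet θ) φ (val2 A κ) →
      ∃ κ' θ' : ZFSet.{u}, ZCard κ' ∧ ZCard θ' ∧ κ' ∈ θ' ∧ κ' ∈ κ ∧
        SatIn ∅ (HSet θ') φ (val2 (A ∩ κ') κ')

/-- `j` is an elementary embedding of the `∈`-structure (with predicate `R`)
with carrier `X` into the one with carrier `Y`. -/
def ElemEmbOn (R : Set ZFSet.{u}) (X Y : Set ZFSet.{u}) (j : ZFSet.{u} → ZFSet.{u}) : Prop :=
  (∀ x ∈ X, j x ∈ Y) ∧
    ∀ (φ : SF) (v : ℕ → ZFSet.{u}), (∀ i, v i ∈ X) →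
      (SatIn R X φ v ↔ SatIn R Y φ (fun i => j (v i)))

/-- `X` is an elementary submodel of `Y` (as `∈`-structures with predicate `R`). -/
def ElemSub (R : Set ZFSet.{u}) (X Y : Set ZFSet.{u}) : Prop :=
  X ⊆ Y ∧ ∀ (φ : SF) (v : ℕ → ZFSet.{u}), (∀ i, v i ∈ X) → (SatIn R X φ v ↔ SatIn R Y φ v)

/-- `X` is a Σₙ-elementary submodel of `Y`. -/
def SigmaElemSub (R : Set ZFSet.{u}) (n : ℕ) (X Y : Set ZFSet.{u}) : Prop :=
  X ⊆ Y ∧ ∀ (φ : SF), IsSigma n φ → ∀ (v : ℕ → ZFSet.{u}), (∀ i, v i ∈ X) →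
    (SatIn R X φ v ↔ SatIn R Y φ v)

/-- The stages of the von Neumann hierarchy, as classes:
`Vclass o` consists of all sets of rank less than `o`. -/
def Vclass (o : Ordinal.{u}) : Set ZFSet.{u} := {x | ZFSet.rank x < o}

/-- The intersection `A ∩ V_c` (for `c` an ordinal). -/
def Vres (A c : ZFSet.{u}) : ZFSet.{u} :=
  ZFSet.sep (fun y => ZFSet.rank y < ZFSet.rank c) A

/-- `κ` is a shrewd cardinal (Rathjen): for every formula `Φ(v₀,v₁)`, every
ordinal `α` and every `A ⊆ V_κ` such that `Φ(A,κ)` holds in `V_{κ+α}`, there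
are ordinals `κ̄, ᾱ < κ` such that `Φ(A ∩ V_κ̄, κ̄)` holds in `V_{κ̄+ᾱ}`. -/
def Shrewd (κ : ZFSet.{u}) : Prop :=
  ZCard κ ∧
    ∀ (φ : SF) (α A : ZFSet.{u}), φ.fv ⊆ {0, 1} → ZOrd α →
      (∀ y ∈ A, ZFSet.rank y < ZFSet.rank κ) →
      SatIn ∅ (Vclass (ZFSet.rank κ + ZFSet.rank α)) φ (val2 A κ) →
      ∃ κ' α' : ZFSet.{u}, κ' ∈ κ ∧ α' ∈ κ ∧
        SatIn ∅ (Vclass (ZFSet.rank κ' + ZFSet.rank α')) φ (val2 (Vres A κ') κ')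

/-! ### Auxiliary development -/

section Aux

open ZFSet Ordinal

@[simp] lemma sat_mem {P E S} {i j : ℕ} {v : ℕ → ZFSet.{u}} :
    Sat P E S (.mem i j) v ↔ E (v i) (v j) := Iff.rfl
@[simp] lemma sat_eq {P E S} {i j : ℕ} {v : ℕ → ZFSet.{u}} :
    Sat P E S (.eq i j) v ↔ v i = v j := Iff.rfl
@[simp] lemma sat_pred {P E S} {i : ℕ} {v : ℕ → ZFSet.{u}} :
    Sat P E S (.pred i) v ↔ v i ∈ P := Iff.rfl
@[simp] lemma sat_not {P E S} {φ : SF} {v : ℕ → ZFSet.{u}} :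
    Sat P E S (.not φ) v ↔ ¬ Sat P E S φ v := Iff.rfl
@[simp] lemma sat_and {P E S} {φ ψ : SF} {v : ℕ → ZFSet.{u}} :
    Sat P E S (.and φ ψ) v ↔ Sat P E S φ v ∧ Sat P E S ψ v := Iff.rfl
@[simp] lemma sat_ex {P E S} {k : ℕ} {φ : SF} {v : ℕ → ZFSet.{u}} :
    Sat P E S (.ex k φ) v ↔ ∃ x, x ∈ S ∧ Sat P E S φ (Function.update v k x) := Iff.rfl

/-- Derived connectives. -/
def SF.or (φ ψ : SF) : SF := .not (.and (.not φ) (.not ψ))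
def SF.imp (φ ψ : SF) : SF := .not (.and φ (.not ψ))
def SF.all (k : ℕ) (φ : SF) : SF := .not (.ex k (.not φ))

@[simp] lemma sat_or {P E S} {φ ψ : SF} {v : ℕ → ZFSet.{u}} :
    Sat P E S (SF.or φ ψ) v ↔ Sat P E S φ v ∨ Sat P E S ψ v := by
  simp [SF.or]; try tauto
@[simp] lemma sat_imp {P E S} {φ ψ : SF} {v : ℕ → ZFSet.{u}} :
    Sat P E S (SF.imp φ ψ) v ↔ (Sat P E S φ v → Sat P E S ψ v) := by
  simp [SF.imp]; try tauto
@[simp] lemma sat_all {P E S} {k : ℕ} {φ : SF} {v : ℕ → ZFSet.{u}} :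
    Sat P E S (SF.all k φ) v ↔ ∀ x, x ∈ S → Sat P E S φ (Function.update v k x) := by
  simp [SF.all]; try tauto

@[simp] lemma fv_or {φ ψ : SF} : (SF.or φ ψ).fv = φ.fv ∪ ψ.fv := by simp [SF.or, SF.fv]
@[simp] lemma fv_imp {φ ψ : SF} : (SF.imp φ ψ).fv = φ.fv ∪ ψ.fv := by simp [SF.imp, SF.fv]
@[simp] lemma fv_all {k} {φ : SF} : (SF.all k φ).fv = φ.fv \ {k} := by simp [SF.all, SF.fv]

lemma sat_congr {P E S} : ∀ (φ : SF) {v w : ℕ → ZFSet.{u}},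
    (∀ i ∈ φ.fv, v i = w i) → (Sat P E S φ v ↔ Sat P E S φ w)
  | .mem i j, v, w, h => by
      rw [sat_mem, sat_mem, h i (by simp [SF.fv]), h j (by simp [SF.fv])]
  | .eq i j, v, w, h => by
      rw [sat_eq, sat_eq, h i (by simp [SF.fv]), h j (by simp [SF.fv])]
  | .pred i, v, w, h => by
      rw [sat_pred, sat_pred, h i (by simp [SF.fv])]
  | .not φ, v, w, h => by
      simp only [sat_not]
      exact not_congr (sat_congr φ h)
  | .and φ ψ, v, w, h => by
      simp only [sat_and]
      exact and_congr (sat_congr φ fun i hi => h i (Set.mem_union_left _ hi))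
        (sat_congr ψ fun i hi => h i (Set.mem_union_right _ hi))
  | .ex k φ, v, w, h => by
      simp only [sat_ex]
      refine exists_congr fun x => and_congr_right fun _ => sat_congr φ fun i hi => ?_
      rcases eq_or_ne i k with rfl | hik
      · simp
      · simp only [Function.update_of_ne hik]
        exact h i ⟨hi, hik⟩

end Aux

section Ord

open ZFSet Ordinal Order

lemma ZOrd.trans {x : ZFSet.{u}} (h : ZOrd x) : x.IsTransitive := h.1

lemma ZOrd.mem {x y : ZFSet.{u}} (h : ZOrd x) (hy : y ∈ x) : ZOrd y := by
  refine ⟨h.2 y hy, fun z hz => h.2 z (h.1.mem_trans hz hy)⟩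

lemma ZOrd.tri : ∀ x : ZFSet.{u}, ZOrd x → ∀ y : ZFSet.{u}, ZOrd y →
    x ∈ y ∨ x = y ∨ y ∈ x := by
  intro x
  induction x using ZFSet.mem_wf.induction with
  | _ x IHx =>
    intro hx y
    induction y using ZFSet.mem_wf.induction with
    | _ y IHy =>
      intro hy
      by_cases hxy : x ∈ y
      · exact Or.inl hxy
      by_cases hyx : y ∈ x
      · exact Or.inr (Or.inr hyx)
      refine Or.inr (Or.inl (ZFSet.ext fun w => ⟨fun hw => ?_, fun hw => ?_⟩))
      · rcases IHx w hw (hx.mem hw) y hy with h | h | h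
        · exact h
        · exact absurd (h ▸ hw) hyx
        · exact absurd (hx.1.mem_trans h hw) hyx
      · rcases IHy w hw (hy.mem hw) with h | h | h
        · exact absurd (hy.1.mem_trans h hw) hxy
        · exact absurd (h ▸ hw) hxy
        · exact h

lemma ZOrd.mem_iff_rank_lt {x y : ZFSet.{u}} (hx : ZOrd x) (hy : ZOrd y) :
    x ∈ y ↔ rank x < rank y := by
  constructor
  · exact rank_lt_of_mem
  · intro h
    rcases ZOrd.tri x hx y hy with h' | rfl | h'
    · exact h'
    · exact absurd h (lt_irrefl _)
    · exact absurd h (not_lt.2 (rank_lt_of_mem h').le)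

lemma ZOrd.rank_injOn {x y t : ZFSet.{u}} (ht : ZOrd t) (hx : x ∈ t) (hy : y ∈ t)
    (h : rank x = rank y) : x = y := by
  rcases ZOrd.tri x (ht.mem hx) y (ht.mem hy) with h' | h' | h'
  · exact absurd (rank_lt_of_mem h') (by rw [h]; exact lt_irrefl _)
  · exact h'
  · exact absurd (rank_lt_of_mem h') (by rw [h]; exact lt_irrefl _)

end Ord

section TC

open ZFSet Ordinal Order Cardinal

/-- Iterated unions. -/
noncomputable def sUIter (x : ZFSet.{u}) : ℕ → ZFSet.{u}
  | 0 => x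
  | n + 1 => ⋃₀ (sUIter x n)

/-- The transitive closure of a ZFC set. -/
noncomputable def TCl (x : ZFSet.{u}) : ZFSet.{u} :=
  ⋃₀ ZFSet.range (fun n : ULift.{u} ℕ => sUIter x n.down)

lemma mem_TCl {x z : ZFSet.{u}} : z ∈ TCl x ↔ ∃ n : ℕ, z ∈ sUIter x n := by
  simp only [TCl, ZFSet.mem_sUnion, ZFSet.mem_range]
  constructor
  · rintro ⟨w, ⟨n, rfl⟩, hz⟩
    exact ⟨n.down, hz⟩
  · rintro ⟨n, hz⟩
    exact ⟨sUIter x n, ⟨⟨n⟩, rfl⟩, hz⟩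

lemma subset_TCl {x : ZFSet.{u}} : x ⊆ TCl x := fun z hz => mem_TCl.2 ⟨0, hz⟩

lemma TCl_transitive (x : ZFSet.{u}) : (TCl x).IsTransitive := by
  intro z hz w hw
  rcases mem_TCl.1 hz with ⟨n, hn⟩
  exact mem_TCl.2 ⟨n + 1, ZFSet.mem_sUnion.2 ⟨z, hn, hw⟩⟩

lemma TCl_subset {x t : ZFSet.{u}} (ht : t.IsTransitive) (hxt : x ⊆ t) : TCl x ⊆ t := by
  have key : ∀ (n : ℕ) (z : ZFSet.{u}), z ∈ sUIter x n → z ∈ t := by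
    intro n
    induction n with
    | zero => exact fun z hz => hxt hz
    | succ m IH =>
      intro z hz
      rcases ZFSet.mem_sUnion.1 hz with ⟨w, hw, hzw⟩
      exact ht.mem_trans hzw (IH w hw)
  intro z hz
  rcases mem_TCl.1 hz with ⟨n, hn⟩
  exact key n z hn

lemma rank_TCl_le {x : ZFSet.{u}} : rank (TCl x) ≤ rank x := by
  rw [ZFSet.rank_le_iff]
  intro z hz
  rcases mem_TCl.1 hz with ⟨n, hn⟩
  have : ∀ n : ℕ, rank (sUIter x n) ≤ rank x := by
    intro n
    induction n with
    | zero => exact le_rfl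
    | succ m IH => exact (ZFSet.rank_sUnion_le _).trans IH
  exact lt_of_lt_of_le (ZFSet.rank_lt_of_mem hn) (this n)

lemma TCl_subset_TCl {x y : ZFSet.{u}} (h : x ∈ y) : TCl x ⊆ TCl y :=
  TCl_subset (TCl_transitive y) ((TCl_transitive y).subset_of_mem (subset_TCl h))

lemma exists_rank_eq_TCl : ∀ (y : ZFSet.{u}) (γ : Ordinal.{u}), γ < rank y →
    ∃ z ∈ TCl y, rank z = γ := by
  intro y
  induction y using ZFSet.mem_wf.induction with
  | _ y IH =>
    intro γ hγ
    rcases ZFSet.lt_rank_iff.1 hγ with ⟨w, hw, hle⟩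
    rcases eq_or_lt_of_le hle with h | h
    · exact ⟨w, subset_TCl hw, h.symm⟩
    · rcases IH w hw γ h with ⟨z, hz, hrz⟩
      exact ⟨z, TCl_subset_TCl hw hz, hrz⟩

lemma exists_rank_eq_of_transitive {t : ZFSet.{u}} (ht : t.IsTransitive) {γ : Ordinal.{u}}
    (hγ : γ < rank t) : ∃ z ∈ t, rank z = γ := by
  rcases exists_rank_eq_TCl t γ hγ with ⟨z, hz, hrz⟩
  exact ⟨z, TCl_subset ht (fun _ h => h) hz, hrz⟩

lemma card_toSet_of_ZOrd {t : ZFSet.{u}} (ht : ZOrd t) :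
    Cardinal.mk t.toSet = Cardinal.lift.{u+1} (rank t).card := by
  rw [← Ordinal.mk_Iio_ordinal]
  apply le_antisymm
  · refine Cardinal.mk_le_of_injective (f := fun z : t.toSet =>
      (⟨rank z.1, ZFSet.rank_lt_of_mem z.2⟩ : Set.Iio (rank t))) ?_
    rintro ⟨a, ha⟩ ⟨b, hb⟩ hab
    simp only [Subtype.mk.injEq] at hab ⊢
    exact ZOrd.rank_injOn ht ha hb (congrArg Subtype.val hab)
  · have : ∀ γ : Set.Iio (rank t), ∃ z : t.toSet, rank z.1 = γ.1 := by
      rintro ⟨γ, hγ⟩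
      rcases exists_rank_eq_of_transitive ht.1 hγ with ⟨z, hz, hrz⟩
      exact ⟨⟨z, hz⟩, hrz⟩
    choose f hf using this
    refine Cardinal.mk_le_of_injective (f := f) ?_
    intro a b hab
    have := (hf a).symm.trans (hab ▸ hf b)
    exact Subtype.ext this

lemma lift_card_rank_le_of_surj {y : ZFSet.{u}} :
    Cardinal.lift.{u+1} (rank y).card ≤ #(TCl y).toSet := by
  rw [← Ordinal.mk_Iio_ordinal]
  have : ∀ γ : Set.Iio (rank y), ∃ z : (TCl y).toSet, rank z.1 = γ.1 := by
    rintro ⟨γ, hγ⟩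
    rcases exists_rank_eq_TCl y γ hγ with ⟨z, hz, hrz⟩
    exact ⟨⟨z, hz⟩, hrz⟩
  choose f hf using this
  refine Cardinal.mk_le_of_injective (f := f) ?_
  intro a b hab
  exact Subtype.ext ((hf a).symm.trans (hab ▸ hf b))

lemma rank_lt_of_HSet {y t : ZFSet.{u}} (ht : ZOrd t) (h : y ∈ HSet t) :
    rank y < rank t := by
  rcases h with ⟨w, hw_trans, hyw, hcard⟩
  have h1 : TCl y ⊆ w := TCl_subset hw_trans hyw
  have h2 : #(TCl y).toSet ≤ #w.toSet :=
    Cardinal.mk_le_mk_of_subset (fun z hz => h1 hz)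
  have h3 : Cardinal.lift.{u+1} (rank y).card < Cardinal.lift.{u+1} (rank t).card := by
    calc Cardinal.lift.{u+1} (rank y).card ≤ #(TCl y).toSet := lift_card_rank_le_of_surj
    _ ≤ #w.toSet := h2
    _ < #t.toSet := hcard
    _ = _ := card_toSet_of_ZOrd ht
  have h4 : (rank y).card < (rank t).card := by
    exact_mod_cast (Cardinal.lift_lt).1 h3
  by_contra hc
  exact absurd (Ordinal.card_le_card (not_lt.1 hc)) (not_le.2 h4)

lemma HSet_subset_Vclass {t : ZFSet.{u}} (ht : ZOrd t) {β : Ordinal.{u}}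
    (hβ : rank t < β) : HSet t ⊆ Vclass β := fun y hy =>
  lt_trans (rank_lt_of_HSet ht hy) hβ

end TC

section Inj

open ZFSet Ordinal Order Cardinal

/-- `f` codes an injection of `t` into `u`. -/
def InjZ (f t u : ZFSet.{u}) : Prop :=
  (∀ a ∈ t, ∃ b ∈ u, ZFSet.pair a b ∈ f) ∧
  (∀ a ∈ t, ∀ a' ∈ t, ∀ b : ZFSet.{u}, ZFSet.pair a b ∈ f → ZFSet.pair a' b ∈ f → a = a')

lemma InjZ.card_le {f t u : ZFSet.{u}} (h : InjZ f t u) : #t.toSet ≤ #u.toSet := by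
  have h1 := h.1
  choose g hg1 hg2 using fun (a : t.toSet) => h1 a.1 a.2
  refine Cardinal.mk_le_of_injective (f := fun a => (⟨g a, hg1 a⟩ : u.toSet)) ?_
  intro a b hab
  simp only [Subtype.mk.injEq] at hab
  exact Subtype.ext (h.2 a.1 a.2 b.1 b.2 (g a) (hg2 a) (hab ▸ hg2 b))

lemma rank_pair_eq {a b : ZFSet.{u}} :
    rank (ZFSet.pair a b) = succ (succ (max (rank a) (rank b))) := by
  have hp : ZFSet.pair a b = {{a}, {a, b}} := rfl
  have h2 : rank ({a, b} : ZFSet) = succ (max (rank a) (rank b)) := by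
    rw [ZFSet.rank_pair]
    exact (Order.succ_max _ _).symm
  rw [hp, ZFSet.rank_pair, ZFSet.rank_singleton, h2]
  exact max_eq_right (succ_le_succ (succ_le_succ (le_max_left _ _)))

lemma exists_injZ {t u : ZFSet.{u}} (h : #t.toSet ≤ #u.toSet) :
    ∃ f : ZFSet.{u}, InjZ f t u ∧ rank f ≤ succ (succ (max (rank t) (rank u))) := by
  classical
  obtain ⟨G⟩ := Cardinal.le_def _ _ |>.1 h
  set g : ZFSet.{u} → ZFSet.{u} := fun a => if ha : a ∈ t then (G ⟨a, ha⟩).1 else ∅ with hg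
  letI : ZFSet.Definable₁ (fun a => ZFSet.pair a (g a)) := Classical.allZFSetDefinable _
  set f : ZFSet.{u} := ZFSet.image (fun a => ZFSet.pair a (g a)) t with hf
  have hmem : ∀ z, z ∈ f ↔ ∃ a ∈ t, ZFSet.pair a (g a) = z := fun z => ZFSet.mem_image
  have hgu : ∀ a (ha : a ∈ t), g a ∈ u := by
    intro a ha
    simp only [hg, dif_pos ha]
    exact (G ⟨a, ha⟩).2
  have hginj : ∀ a (ha : a ∈ t) a' (ha' : a' ∈ t), g a = g a' → a = a' := by
    intro a ha a' ha' hgg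
    simp only [hg, dif_pos ha, dif_pos ha'] at hgg
    have := G.injective (Subtype.ext hgg)
    exact congrArg Subtype.val this
  refine ⟨f, ⟨?_, ?_⟩, ?_⟩
  · intro a ha
    exact ⟨g a, hgu a ha, (hmem _).2 ⟨a, ha, rfl⟩⟩
  · intro a ha a' ha' b hab hab'
    rcases (hmem _).1 hab with ⟨c, hc, hcp⟩
    rcases ZFSet.pair_injective hcp with ⟨rfl, rfl⟩
    rcases (hmem _).1 hab' with ⟨c', hc', hcp'⟩
    rcases ZFSet.pair_injective hcp' with ⟨rfl, hgc⟩
    exact (hginj _ hc' _ hc hgc).symm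
  · rw [ZFSet.rank_le_iff]
    intro z hz
    rcases (hmem _).1 hz with ⟨a, ha, rfl⟩
    rw [rank_pair_eq]
    have h1 : rank a < rank t := ZFSet.rank_lt_of_mem ha
    have h2 : rank (g a) < rank u := ZFSet.rank_lt_of_mem (hgu a ha)
    have : max (rank a) (rank (g a)) < max (rank t) (rank u) :=
      max_lt (h1.trans_le (le_max_left _ _)) (h2.trans_le (le_max_right _ _))
    exact succ_lt_succ (succ_lt_succ this)

lemma card_lt_iff_not_injZ_aux {t u : ZFSet.{u}} :
    (¬ ∃ f : ZFSet.{u}, InjZ f t u) → #u.toSet < #t.toSet := by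
  intro h
  by_contra hc
  rcases exists_injZ (not_lt.1 hc) with ⟨f, hf, _⟩
  exact h ⟨f, hf⟩

end Inj

section Forms

open ZFSet Ordinal Order Cardinal

/-- Closure property of an ordinal `β`: `V_β` is closed under 5 rank-successors. -/
def GoodV (β : Ordinal.{u}) : Prop :=
  ∀ x : ZFSet.{u}, rank x < β → succ (succ (succ (succ (succ (rank x))))) < β

lemma mem_Vclass {x : ZFSet.{u}} {β : Ordinal.{u}} : x ∈ Vclass β ↔ rank x < β := Iff.rfl

lemma Vclass_trans {x y : ZFSet.{u}} {β : Ordinal.{u}} (hx : x ∈ Vclass β) (hy : y ∈ x) :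
    y ∈ Vclass β := lt_trans (ZFSet.rank_lt_of_mem hy) hx

lemma GoodV.rk5 {β : Ordinal.{u}} (h : GoodV β) {δ : Ordinal.{u}}
    (hδ : ∃ x : ZFSet.{u}, rank x = δ ∧ x ∈ Vclass β) :
    succ (succ (succ (succ (succ δ)))) < β := by
  rcases hδ with ⟨x, rfl, hx⟩
  exact h x hx

lemma GoodV.rk2 {β : Ordinal.{u}} (h : GoodV β) {δ : Ordinal.{u}}
    (hδ : ∃ x : ZFSet.{u}, rank x = δ ∧ x ∈ Vclass β) :
    succ (succ δ) < β := by
  refine lt_of_le_of_lt ?_ (h.rk5 hδ)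
  exact succ_le_succ (succ_le_succ ((le_succ _).trans ((le_succ _).trans (le_succ _))))

lemma GoodV.max2 {β : Ordinal.{u}} (h : GoodV β) {t u : ZFSet.{u}}
    (ht : t ∈ Vclass β) (hu : u ∈ Vclass β) :
    succ (succ (max (rank t) (rank u))) < β := by
  rcases max_cases (rank t) (rank u) with ⟨heq, _⟩ | ⟨heq, _⟩ <;> rw [heq]
  · exact h.rk2 ⟨t, rfl, ht⟩
  · exact h.rk2 ⟨u, rfl, hu⟩

lemma pair_mem_Vclass {β : Ordinal.{u}} (h : GoodV β) {a b : ZFSet.{u}}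
    (ha : a ∈ Vclass β) (hb : b ∈ Vclass β) : ZFSet.pair a b ∈ Vclass β := by
  rw [mem_Vclass, rank_pair_eq]
  exact h.max2 ha hb

/-- `v x` is transitive. -/
def transF (x a b : ℕ) : SF :=
  SF.all a ((SF.mem a x).imp (SF.all b ((SF.mem b a).imp (SF.mem b x))))

lemma sat_transF {β : Ordinal.{u}} {v : ℕ → ZFSet.{u}} {x a b : ℕ}
    (hax : a ≠ x) (hba : b ≠ a) (hbx : b ≠ x) (hvx : v x ∈ Vclass β) :
    Sat ∅ (· ∈ ·) (Vclass β) (transF x a b) v ↔ (v x).IsTransitive := by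
  simp only [transF, sat_all, sat_imp, sat_mem, Function.update_apply, if_pos rfl,
    hax, hba, hbx, Ne.symm hax, Ne.symm hba, Ne.symm hbx, if_neg, if_false]
  constructor
  · intro H z hz w hw
    exact H z (Vclass_trans hvx hz) hz w (Vclass_trans (Vclass_trans hvx hz) hw) hw
  · intro H z _ hz w _ hw
    exact H z hz hw

/-- `v x ⊆ v y`. -/
def subF (x y a : ℕ) : SF := SF.all a ((SF.mem a x).imp (SF.mem a y))

lemma sat_subF {β : Ordinal.{u}} {v : ℕ → ZFSet.{u}} {x y a : ℕ}
    (hax : a ≠ x) (hay : a ≠ y) (hvx : v x ∈ Vclass β) :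
    Sat ∅ (· ∈ ·) (Vclass β) (subF x y a) v ↔ v x ⊆ v y := by
  simp only [subF, sat_all, sat_imp, sat_mem, Function.update_apply, if_pos rfl,
    Ne.symm hax, Ne.symm hay, if_neg, if_false]
  constructor
  · intro H z hz
    exact H z (Vclass_trans hvx hz) hz
  · intro H z _ hz
    exact H hz

end Forms

section Forms2

open ZFSet Ordinal Order Cardinal

def SF.iff (φ ψ : SF) : SF := (SF.imp φ ψ).and (SF.imp ψ φ)

@[simp] lemma sat_iff {P E S} {φ ψ : SF} {v : ℕ → ZFSet.{u}} :
    Sat P E S (SF.iff φ ψ) v ↔ (Sat P E S φ v ↔ Sat P E S ψ v) := by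
  simp [SF.iff]; tauto

@[simp] lemma fv_iff {φ ψ : SF} : (SF.iff φ ψ).fv = φ.fv ∪ ψ.fv := by
  ext i
  simp [SF.iff, SF.fv]
  tauto

/-- `v z = {v a}`. -/
def singF (z a w : ℕ) : SF := SF.all w ((SF.mem w z).iff (SF.eq w a))

lemma sat_singF {β : Ordinal.{u}} {v : ℕ → ZFSet.{u}} {z a w : ℕ}
    (hwz : w ≠ z) (hwa : w ≠ a) (hvz : v z ∈ Vclass β) (hva : v a ∈ Vclass β) :
    Sat ∅ (· ∈ ·) (Vclass β) (singF z a w) v ↔ v z = {v a} := by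
  simp only [singF, sat_all, sat_iff, sat_mem, sat_eq, Function.update_apply, if_pos rfl,
    Ne.symm hwz, Ne.symm hwa, if_neg, if_false]
  constructor
  · intro H
    apply ZFSet.ext
    intro c
    rw [ZFSet.mem_singleton]
    constructor
    · intro hc
      exact (H c (Vclass_trans hvz hc)).1 hc
    · rintro rfl
      exact (H _ hva).2 rfl
  · intro H c _
    rw [H, ZFSet.mem_singleton]

/-- `v z = {v a, v b}`. -/
def pairF (z a b w : ℕ) : SF := SF.all w ((SF.mem w z).iff ((SF.eq w a).or (SF.eq w b)))

lemma sat_pairF {β : Ordinal.{u}} {v : ℕ → ZFSet.{u}} {z a b w : ℕ}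
    (hwz : w ≠ z) (hwa : w ≠ a) (hwb : w ≠ b)
    (hvz : v z ∈ Vclass β) (hva : v a ∈ Vclass β) (hvb : v b ∈ Vclass β) :
    Sat ∅ (· ∈ ·) (Vclass β) (pairF z a b w) v ↔ v z = {v a, v b} := by
  simp only [pairF, sat_all, sat_iff, sat_or, sat_mem, sat_eq, Function.update_apply,
    if_pos rfl, Ne.symm hwz, Ne.symm hwa, Ne.symm hwb, if_neg, if_false]
  constructor
  · intro H
    apply ZFSet.ext
    intro c
    rw [ZFSet.mem_pair]
    constructor
    · intro hc
      exact (H c (Vclass_trans hvz hc)).1 hc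
    · rintro (rfl | rfl)
      · exact (H _ hva).2 (Or.inl rfl)
      · exact (H _ hvb).2 (Or.inr rfl)
  · intro H c _
    rw [H, ZFSet.mem_pair]

/-- `v p = pair (v a) (v b)` (Kuratowski). -/
def pairEqF (p a b w z : ℕ) : SF :=
  SF.all z ((SF.mem z p).iff ((singF z a w).or (pairF z a b w)))

lemma sat_pairEqF {β : Ordinal.{u}} (hG : GoodV β) {v : ℕ → ZFSet.{u}} {p a b w z : ℕ}
    (hzp : z ≠ p) (hza : z ≠ a) (hzb : z ≠ b) (hwz : w ≠ z) (hwa : w ≠ a) (hwb : w ≠ b)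
    (hvp : v p ∈ Vclass β) (hva : v a ∈ Vclass β) (hvb : v b ∈ Vclass β) :
    Sat ∅ (· ∈ ·) (Vclass β) (pairEqF p a b w z) v ↔ v p = ZFSet.pair (v a) (v b) := by
  have hsa : ({v a} : ZFSet.{u}) ∈ Vclass β := by
    rw [mem_Vclass, ZFSet.rank_singleton]
    exact lt_of_le_of_lt (succ_le_succ (le_succ _)) (hG.rk2 ⟨v a, rfl, hva⟩)
  have hsab : ({v a, v b} : ZFSet.{u}) ∈ Vclass β := by
    rw [mem_Vclass, ZFSet.rank_pair, ← Order.succ_max]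
    rcases max_cases (rank (v a)) (rank (v b)) with ⟨heq, _⟩ | ⟨heq, _⟩ <;> rw [heq]
    · exact lt_of_le_of_lt (succ_le_succ (le_succ _)) (hG.rk2 ⟨v a, rfl, hva⟩)
    · exact lt_of_le_of_lt (succ_le_succ (le_succ _)) (hG.rk2 ⟨v b, rfl, hvb⟩)
  have key : ∀ zz, zz ∈ Vclass β →
      (Sat ∅ (· ∈ ·) (Vclass β) ((singF z a w).or (pairF z a b w)) (Function.update v z zz) ↔
        (zz = {v a} ∨ zz = {v a, v b})) := by
    intro zz hzz
    rw [sat_or,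
      sat_singF hwz hwa (by simpa [Function.update_apply] using hzz)
        (by simpa [Function.update_apply, Ne.symm hza] using hva),
      sat_pairF hwz hwa hwb (by simpa [Function.update_apply] using hzz)
        (by simpa [Function.update_apply, Ne.symm hza] using hva)
        (by simpa [Function.update_apply, Ne.symm hzb] using hvb)]
    simp [Function.update_apply, Ne.symm hza, Ne.symm hzb]
  have hpair : ZFSet.pair (v a) (v b) = ({{v a}, {v a, v b}} : ZFSet.{u}) := rfl
  simp only [pairEqF, sat_all, sat_iff, sat_mem, Function.update_apply, if_pos rfl,
    Ne.symm hzp, if_neg, if_false]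
  constructor
  · intro H
    apply ZFSet.ext
    intro c
    rw [hpair, ZFSet.mem_pair]
    constructor
    · intro hc
      have hcV : c ∈ Vclass β := Vclass_trans hvp hc
      have := ((H c hcV).1 hc)
      rwa [key c hcV] at this
    · intro hc
      have hcV : c ∈ Vclass β := by
        rcases hc with rfl | rfl
        · exact hsa
        · exact hsab
      exact (H c hcV).2 ((key c hcV).2 hc)
  · intro H c hcV
    rw [key c hcV, H, hpair, ZFSet.mem_pair]
    simp

/-- `pair (v a) (v b) ∈ v f`. -/
def memPairF (f a b p w z : ℕ) : SF := SF.ex p ((SF.mem p f).and (pairEqF p a b w z))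

lemma sat_memPairF {β : Ordinal.{u}} (hG : GoodV β) {v : ℕ → ZFSet.{u}} {f a b p w z : ℕ}
    (hpf : p ≠ f) (hpa : p ≠ a) (hpb : p ≠ b)
    (hzp : z ≠ p) (hza : z ≠ a) (hzb : z ≠ b) (hwz : w ≠ z) (hwa : w ≠ a) (hwb : w ≠ b)
    (hvf : v f ∈ Vclass β) (hva : v a ∈ Vclass β) (hvb : v b ∈ Vclass β) :
    Sat ∅ (· ∈ ·) (Vclass β) (memPairF f a b p w z) v ↔
      ZFSet.pair (v a) (v b) ∈ v f := by
  simp only [memPairF, sat_ex, sat_and, sat_mem]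
  constructor
  · rintro ⟨pp, hppV, hmem, hpe⟩
    rw [sat_pairEqF hG hzp hza hzb hwz hwa hwb
      (by simpa [Function.update_apply] using hppV)
      (by simpa [Function.update_apply, Ne.symm hpa] using hva)
      (by simpa [Function.update_apply, Ne.symm hpb] using hvb)] at hpe
    simp only [Function.update_apply, if_pos rfl, Ne.symm hpa, Ne.symm hpb, Ne.symm hpf,
      if_neg, if_false] at hpe hmem
    rwa [← hpe]
  · intro hmem
    refine ⟨ZFSet.pair (v a) (v b), pair_mem_Vclass hG hva hvb, ?_, ?_⟩
    · simpa [Function.update_apply, Ne.symm hpf] using hmem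
    · rw [sat_pairEqF hG hzp hza hzb hwz hwa hwb
        (by simpa [Function.update_apply] using pair_mem_Vclass hG hva hvb)
        (by simpa [Function.update_apply, Ne.symm hpa] using hva)
        (by simpa [Function.update_apply, Ne.symm hpb] using hvb)]
      simp [Function.update_apply, Ne.symm hpa, Ne.symm hpb]

end Forms2



section Forms3

open ZFSet Ordinal Order Cardinal

/-- `v f` codes an injection of `v t` into `v u`. -/
def injF (f t u a a' b p w z : ℕ) : SF :=
  (SF.all a ((SF.mem a t).imp
    (SF.ex b ((SF.mem b u).and (memPairF f a b p w z))))).and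
  (SF.all a ((SF.mem a t).imp (SF.all a' ((SF.mem a' t).imp
    (SF.all b (((memPairF f a b p w z).and (memPairF f a' b p w z)).imp (SF.eq a a')))))))

lemma sat_injF {β : Ordinal.{u}} (hG : GoodV β) {v : ℕ → ZFSet.{u}} {f t u a a' b p w z : ℕ}
    (hat : a ≠ t) (hau : a ≠ u) (haf : a ≠ f)
    (ha't : a' ≠ t) (ha'f : a' ≠ f) (ha'a : a' ≠ a)
    (hbu : b ≠ u) (hbf : b ≠ f) (hba : b ≠ a) (hba' : b ≠ a') (hbt : b ≠ t)
    (hpf : p ≠ f) (hpa : p ≠ a) (hpa' : p ≠ a') (hpb : p ≠ b)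
    (hzp : z ≠ p) (hza : z ≠ a) (hza' : z ≠ a') (hzb : z ≠ b)
    (hwz : w ≠ z) (hwa : w ≠ a) (hwa' : w ≠ a') (hwb : w ≠ b)
    (hvf : v f ∈ Vclass β) (hvt : v t ∈ Vclass β) (hvu : v u ∈ Vclass β) :
    Sat ∅ (· ∈ ·) (Vclass β) (injF f t u a a' b p w z) v ↔ InjZ (v f) (v t) (v u) := by
  constructor
  · rintro ⟨H1, H2⟩
    constructor
    · intro aa haa
      have haaV : aa ∈ Vclass β := Vclass_trans hvt haa
      rw [sat_all] at H1
      have h1 := H1 aa haaV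
      rw [sat_imp, sat_mem] at h1
      simp only [Function.update_apply, eq_self_iff_true, if_true, if_false, hat, hau, haf, ha't, ha'f, ha'a, hbu, hbf, hba, hba', hbt, hpf, hpa, hpa', hpb, hzp, hza, hza', hzb, hwz, hwa, hwa', hwb, Ne.symm hat, Ne.symm hau, Ne.symm haf, Ne.symm ha't, Ne.symm ha'f, Ne.symm ha'a, Ne.symm hbu, Ne.symm hbf, Ne.symm hba, Ne.symm hba', Ne.symm hbt, Ne.symm hpf, Ne.symm hpa, Ne.symm hpa', Ne.symm hpb, Ne.symm hzp, Ne.symm hza, Ne.symm hza', Ne.symm hzb, Ne.symm hwz, Ne.symm hwa, Ne.symm hwa', Ne.symm hwb] at h1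
      have h2 := h1 haa
      rw [sat_ex] at h2
      rcases h2 with ⟨bb, hbbV, h3⟩
      rw [sat_and, sat_mem] at h3
      rcases h3 with ⟨h4, h5⟩
      rw [sat_memPairF hG hpf hpa hpb hzp hza hzb hwz hwa hwb
        (by simpa only [Function.update_apply, eq_self_iff_true, if_true, if_false, hat, hau, haf, ha't, ha'f, ha'a, hbu, hbf, hba, hba', hbt, hpf, hpa, hpa', hpb, hzp, hza, hza', hzb, hwz, hwa, hwa', hwb, Ne.symm hat, Ne.symm hau, Ne.symm haf, Ne.symm ha't, Ne.symm ha'f, Ne.symm ha'a, Ne.symm hbu, Ne.symm hbf, Ne.symm hba, Ne.symm hba', Ne.symm hbt, Ne.symm hpf, Ne.symm hpa, Ne.symm hpa', Ne.symm hpb, Ne.symm hzp, Ne.symm hza, Ne.symm hza', Ne.symm hzb, Ne.symm hwz, Ne.symm hwa, Ne.symm hwa', Ne.symm hwb] using hvf)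
        (by simpa only [Function.update_apply, eq_self_iff_true, if_true, if_false, hat, hau, haf, ha't, ha'f, ha'a, hbu, hbf, hba, hba', hbt, hpf, hpa, hpa', hpb, hzp, hza, hza', hzb, hwz, hwa, hwa', hwb, Ne.symm hat, Ne.symm hau, Ne.symm haf, Ne.symm ha't, Ne.symm ha'f, Ne.symm ha'a, Ne.symm hbu, Ne.symm hbf, Ne.symm hba, Ne.symm hba', Ne.symm hbt, Ne.symm hpf, Ne.symm hpa, Ne.symm hpa', Ne.symm hpb, Ne.symm hzp, Ne.symm hza, Ne.symm hza', Ne.symm hzb, Ne.symm hwz, Ne.symm hwa, Ne.symm hwa', Ne.symm hwb] using haaV)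
        (by simpa only [Function.update_apply, eq_self_iff_true, if_true, if_false, hat, hau, haf, ha't, ha'f, ha'a, hbu, hbf, hba, hba', hbt, hpf, hpa, hpa', hpb, hzp, hza, hza', hzb, hwz, hwa, hwa', hwb, Ne.symm hat, Ne.symm hau, Ne.symm haf, Ne.symm ha't, Ne.symm ha'f, Ne.symm ha'a, Ne.symm hbu, Ne.symm hbf, Ne.symm hba, Ne.symm hba', Ne.symm hbt, Ne.symm hpf, Ne.symm hpa, Ne.symm hpa', Ne.symm hpb, Ne.symm hzp, Ne.symm hza, Ne.symm hza', Ne.symm hzb, Ne.symm hwz, Ne.symm hwa, Ne.symm hwa', Ne.symm hwb] using hbbV)] at h5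
      simp only [Function.update_apply, eq_self_iff_true, if_true, if_false, hat, hau, haf, ha't, ha'f, ha'a, hbu, hbf, hba, hba', hbt, hpf, hpa, hpa', hpb, hzp, hza, hza', hzb, hwz, hwa, hwa', hwb, Ne.symm hat, Ne.symm hau, Ne.symm haf, Ne.symm ha't, Ne.symm ha'f, Ne.symm ha'a, Ne.symm hbu, Ne.symm hbf, Ne.symm hba, Ne.symm hba', Ne.symm hbt, Ne.symm hpf, Ne.symm hpa, Ne.symm hpa', Ne.symm hpb, Ne.symm hzp, Ne.symm hza, Ne.symm hza', Ne.symm hzb, Ne.symm hwz, Ne.symm hwa, Ne.symm hwa', Ne.symm hwb] at h4 h5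
      exact ⟨bb, h4, h5⟩
    · intro aa haa aa' haa' bb hp1 hp2
      have haaV : aa ∈ Vclass β := Vclass_trans hvt haa
      have haaV' : aa' ∈ Vclass β := Vclass_trans hvt haa'
      have hbbV : bb ∈ Vclass β := by
        have hpV : ZFSet.pair aa bb ∈ Vclass β := Vclass_trans hvf hp1
        have hm : ({aa, bb} : ZFSet.{u}) ∈ ZFSet.pair aa bb := by
          rw [show ZFSet.pair aa bb = ({{aa}, {aa, bb}} : ZFSet.{u}) from rfl,
            ZFSet.mem_pair]
          exact Or.inr rfl
        exact Vclass_trans (Vclass_trans hpV hm) (by rw [ZFSet.mem_pair]; exact Or.inr rfl)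
      rw [sat_all] at H2
      have h1 := H2 aa haaV
      rw [sat_imp, sat_mem] at h1
      simp only [Function.update_apply, eq_self_iff_true, if_true, if_false, hat, hau, haf, ha't, ha'f, ha'a, hbu, hbf, hba, hba', hbt, hpf, hpa, hpa', hpb, hzp, hza, hza', hzb, hwz, hwa, hwa', hwb, Ne.symm hat, Ne.symm hau, Ne.symm haf, Ne.symm ha't, Ne.symm ha'f, Ne.symm ha'a, Ne.symm hbu, Ne.symm hbf, Ne.symm hba, Ne.symm hba', Ne.symm hbt, Ne.symm hpf, Ne.symm hpa, Ne.symm hpa', Ne.symm hpb, Ne.symm hzp, Ne.symm hza, Ne.symm hza', Ne.symm hzb, Ne.symm hwz, Ne.symm hwa, Ne.symm hwa', Ne.symm hwb] at h1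
      have h2 := h1 haa
      rw [sat_all] at h2
      have h3 := h2 aa' haaV'
      rw [sat_imp, sat_mem] at h3
      simp only [Function.update_apply, eq_self_iff_true, if_true, if_false, hat, hau, haf, ha't, ha'f, ha'a, hbu, hbf, hba, hba', hbt, hpf, hpa, hpa', hpb, hzp, hza, hza', hzb, hwz, hwa, hwa', hwb, Ne.symm hat, Ne.symm hau, Ne.symm haf, Ne.symm ha't, Ne.symm ha'f, Ne.symm ha'a, Ne.symm hbu, Ne.symm hbf, Ne.symm hba, Ne.symm hba', Ne.symm hbt, Ne.symm hpf, Ne.symm hpa, Ne.symm hpa', Ne.symm hpb, Ne.symm hzp, Ne.symm hza, Ne.symm hza', Ne.symm hzb, Ne.symm hwz, Ne.symm hwa, Ne.symm hwa', Ne.symm hwb] at h3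
      have h4 := h3 haa'
      rw [sat_all] at h4
      have h5 := h4 bb hbbV
      rw [sat_imp, sat_and] at h5
      rw [sat_memPairF hG hpf hpa hpb hzp hza hzb hwz hwa hwb
        (by simpa only [Function.update_apply, eq_self_iff_true, if_true, if_false, hat, hau, haf, ha't, ha'f, ha'a, hbu, hbf, hba, hba', hbt, hpf, hpa, hpa', hpb, hzp, hza, hza', hzb, hwz, hwa, hwa', hwb, Ne.symm hat, Ne.symm hau, Ne.symm haf, Ne.symm ha't, Ne.symm ha'f, Ne.symm ha'a, Ne.symm hbu, Ne.symm hbf, Ne.symm hba, Ne.symm hba', Ne.symm hbt, Ne.symm hpf, Ne.symm hpa, Ne.symm hpa', Ne.symm hpb, Ne.symm hzp, Ne.symm hza, Ne.symm hza', Ne.symm hzb, Ne.symm hwz, Ne.symm hwa, Ne.symm hwa', Ne.symm hwb] using hvf)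
        (by simpa only [Function.update_apply, eq_self_iff_true, if_true, if_false, hat, hau, haf, ha't, ha'f, ha'a, hbu, hbf, hba, hba', hbt, hpf, hpa, hpa', hpb, hzp, hza, hza', hzb, hwz, hwa, hwa', hwb, Ne.symm hat, Ne.symm hau, Ne.symm haf, Ne.symm ha't, Ne.symm ha'f, Ne.symm ha'a, Ne.symm hbu, Ne.symm hbf, Ne.symm hba, Ne.symm hba', Ne.symm hbt, Ne.symm hpf, Ne.symm hpa, Ne.symm hpa', Ne.symm hpb, Ne.symm hzp, Ne.symm hza, Ne.symm hza', Ne.symm hzb, Ne.symm hwz, Ne.symm hwa, Ne.symm hwa', Ne.symm hwb] using haaV)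
        (by simpa only [Function.update_apply, eq_self_iff_true, if_true, if_false, hat, hau, haf, ha't, ha'f, ha'a, hbu, hbf, hba, hba', hbt, hpf, hpa, hpa', hpb, hzp, hza, hza', hzb, hwz, hwa, hwa', hwb, Ne.symm hat, Ne.symm hau, Ne.symm haf, Ne.symm ha't, Ne.symm ha'f, Ne.symm ha'a, Ne.symm hbu, Ne.symm hbf, Ne.symm hba, Ne.symm hba', Ne.symm hbt, Ne.symm hpf, Ne.symm hpa, Ne.symm hpa', Ne.symm hpb, Ne.symm hzp, Ne.symm hza, Ne.symm hza', Ne.symm hzb, Ne.symm hwz, Ne.symm hwa, Ne.symm hwa', Ne.symm hwb] using hbbV),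
        sat_memPairF hG hpf hpa' hpb hzp hza' hzb hwz hwa' hwb
        (by simpa only [Function.update_apply, eq_self_iff_true, if_true, if_false, hat, hau, haf, ha't, ha'f, ha'a, hbu, hbf, hba, hba', hbt, hpf, hpa, hpa', hpb, hzp, hza, hza', hzb, hwz, hwa, hwa', hwb, Ne.symm hat, Ne.symm hau, Ne.symm haf, Ne.symm ha't, Ne.symm ha'f, Ne.symm ha'a, Ne.symm hbu, Ne.symm hbf, Ne.symm hba, Ne.symm hba', Ne.symm hbt, Ne.symm hpf, Ne.symm hpa, Ne.symm hpa', Ne.symm hpb, Ne.symm hzp, Ne.symm hza, Ne.symm hza', Ne.symm hzb, Ne.symm hwz, Ne.symm hwa, Ne.symm hwa', Ne.symm hwb] using hvf)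
        (by simpa only [Function.update_apply, eq_self_iff_true, if_true, if_false, hat, hau, haf, ha't, ha'f, ha'a, hbu, hbf, hba, hba', hbt, hpf, hpa, hpa', hpb, hzp, hza, hza', hzb, hwz, hwa, hwa', hwb, Ne.symm hat, Ne.symm hau, Ne.symm haf, Ne.symm ha't, Ne.symm ha'f, Ne.symm ha'a, Ne.symm hbu, Ne.symm hbf, Ne.symm hba, Ne.symm hba', Ne.symm hbt, Ne.symm hpf, Ne.symm hpa, Ne.symm hpa', Ne.symm hpb, Ne.symm hzp, Ne.symm hza, Ne.symm hza', Ne.symm hzb, Ne.symm hwz, Ne.symm hwa, Ne.symm hwa', Ne.symm hwb] using haaV')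
        (by simpa only [Function.update_apply, eq_self_iff_true, if_true, if_false, hat, hau, haf, ha't, ha'f, ha'a, hbu, hbf, hba, hba', hbt, hpf, hpa, hpa', hpb, hzp, hza, hza', hzb, hwz, hwa, hwa', hwb, Ne.symm hat, Ne.symm hau, Ne.symm haf, Ne.symm ha't, Ne.symm ha'f, Ne.symm ha'a, Ne.symm hbu, Ne.symm hbf, Ne.symm hba, Ne.symm hba', Ne.symm hbt, Ne.symm hpf, Ne.symm hpa, Ne.symm hpa', Ne.symm hpb, Ne.symm hzp, Ne.symm hza, Ne.symm hza', Ne.symm hzb, Ne.symm hwz, Ne.symm hwa, Ne.symm hwa', Ne.symm hwb] using hbbV), sat_eq] at h5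
      simp only [Function.update_apply, eq_self_iff_true, if_true, if_false, hat, hau, haf, ha't, ha'f, ha'a, hbu, hbf, hba, hba', hbt, hpf, hpa, hpa', hpb, hzp, hza, hza', hzb, hwz, hwa, hwa', hwb, Ne.symm hat, Ne.symm hau, Ne.symm haf, Ne.symm ha't, Ne.symm ha'f, Ne.symm ha'a, Ne.symm hbu, Ne.symm hbf, Ne.symm hba, Ne.symm hba', Ne.symm hbt, Ne.symm hpf, Ne.symm hpa, Ne.symm hpa', Ne.symm hpb, Ne.symm hzp, Ne.symm hza, Ne.symm hza', Ne.symm hzb, Ne.symm hwz, Ne.symm hwa, Ne.symm hwa', Ne.symm hwb] at h5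
      exact h5 ⟨hp1, hp2⟩
  · rintro ⟨H1, H2⟩
    constructor
    · rw [sat_all]
      intro aa haaV
      rw [sat_imp, sat_mem]
      simp only [Function.update_apply, eq_self_iff_true, if_true, if_false, hat, hau, haf, ha't, ha'f, ha'a, hbu, hbf, hba, hba', hbt, hpf, hpa, hpa', hpb, hzp, hza, hza', hzb, hwz, hwa, hwa', hwb, Ne.symm hat, Ne.symm hau, Ne.symm haf, Ne.symm ha't, Ne.symm ha'f, Ne.symm ha'a, Ne.symm hbu, Ne.symm hbf, Ne.symm hba, Ne.symm hba', Ne.symm hbt, Ne.symm hpf, Ne.symm hpa, Ne.symm hpa', Ne.symm hpb, Ne.symm hzp, Ne.symm hza, Ne.symm hza', Ne.symm hzb, Ne.symm hwz, Ne.symm hwa, Ne.symm hwa', Ne.symm hwb]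
      intro haa
      rcases H1 aa haa with ⟨bb, hbb, hpair⟩
      rw [sat_ex]
      refine ⟨bb, Vclass_trans hvu hbb, ?_⟩
      rw [sat_and, sat_mem]
      refine ⟨by simpa only [Function.update_apply, eq_self_iff_true, if_true, if_false, hat, hau, haf, ha't, ha'f, ha'a, hbu, hbf, hba, hba', hbt, hpf, hpa, hpa', hpb, hzp, hza, hza', hzb, hwz, hwa, hwa', hwb, Ne.symm hat, Ne.symm hau, Ne.symm haf, Ne.symm ha't, Ne.symm ha'f, Ne.symm ha'a, Ne.symm hbu, Ne.symm hbf, Ne.symm hba, Ne.symm hba', Ne.symm hbt, Ne.symm hpf, Ne.symm hpa, Ne.symm hpa', Ne.symm hpb, Ne.symm hzp, Ne.symm hza, Ne.symm hza', Ne.symm hzb, Ne.symm hwz, Ne.symm hwa, Ne.symm hwa', Ne.symm hwb] using hbb, ?_⟩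
      rw [sat_memPairF hG hpf hpa hpb hzp hza hzb hwz hwa hwb
          (by simpa only [Function.update_apply, eq_self_iff_true, if_true, if_false, hat, hau, haf, ha't, ha'f, ha'a, hbu, hbf, hba, hba', hbt, hpf, hpa, hpa', hpb, hzp, hza, hza', hzb, hwz, hwa, hwa', hwb, Ne.symm hat, Ne.symm hau, Ne.symm haf, Ne.symm ha't, Ne.symm ha'f, Ne.symm ha'a, Ne.symm hbu, Ne.symm hbf, Ne.symm hba, Ne.symm hba', Ne.symm hbt, Ne.symm hpf, Ne.symm hpa, Ne.symm hpa', Ne.symm hpb, Ne.symm hzp, Ne.symm hza, Ne.symm hza', Ne.symm hzb, Ne.symm hwz, Ne.symm hwa, Ne.symm hwa', Ne.symm hwb] using hvf)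
          (by simpa only [Function.update_apply, eq_self_iff_true, if_true, if_false, hat, hau, haf, ha't, ha'f, ha'a, hbu, hbf, hba, hba', hbt, hpf, hpa, hpa', hpb, hzp, hza, hza', hzb, hwz, hwa, hwa', hwb, Ne.symm hat, Ne.symm hau, Ne.symm haf, Ne.symm ha't, Ne.symm ha'f, Ne.symm ha'a, Ne.symm hbu, Ne.symm hbf, Ne.symm hba, Ne.symm hba', Ne.symm hbt, Ne.symm hpf, Ne.symm hpa, Ne.symm hpa', Ne.symm hpb, Ne.symm hzp, Ne.symm hza, Ne.symm hza', Ne.symm hzb, Ne.symm hwz, Ne.symm hwa, Ne.symm hwa', Ne.symm hwb] using Vclass_trans hvt haa)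
          (by simpa only [Function.update_apply, eq_self_iff_true, if_true, if_false, hat, hau, haf, ha't, ha'f, ha'a, hbu, hbf, hba, hba', hbt, hpf, hpa, hpa', hpb, hzp, hza, hza', hzb, hwz, hwa, hwa', hwb, Ne.symm hat, Ne.symm hau, Ne.symm haf, Ne.symm ha't, Ne.symm ha'f, Ne.symm ha'a, Ne.symm hbu, Ne.symm hbf, Ne.symm hba, Ne.symm hba', Ne.symm hbt, Ne.symm hpf, Ne.symm hpa, Ne.symm hpa', Ne.symm hpb, Ne.symm hzp, Ne.symm hza, Ne.symm hza', Ne.symm hzb, Ne.symm hwz, Ne.symm hwa, Ne.symm hwa', Ne.symm hwb] using Vclass_trans hvu hbb)]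
      simpa only [Function.update_apply, eq_self_iff_true, if_true, if_false, hat, hau, haf, ha't, ha'f, ha'a, hbu, hbf, hba, hba', hbt, hpf, hpa, hpa', hpb, hzp, hza, hza', hzb, hwz, hwa, hwa', hwb, Ne.symm hat, Ne.symm hau, Ne.symm haf, Ne.symm ha't, Ne.symm ha'f, Ne.symm ha'a, Ne.symm hbu, Ne.symm hbf, Ne.symm hba, Ne.symm hba', Ne.symm hbt, Ne.symm hpf, Ne.symm hpa, Ne.symm hpa', Ne.symm hpb, Ne.symm hzp, Ne.symm hza, Ne.symm hza', Ne.symm hzb, Ne.symm hwz, Ne.symm hwa, Ne.symm hwa', Ne.symm hwb] using hpair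
    · rw [sat_all]
      intro aa haaV
      rw [sat_imp, sat_mem]
      simp only [Function.update_apply, eq_self_iff_true, if_true, if_false, hat, hau, haf, ha't, ha'f, ha'a, hbu, hbf, hba, hba', hbt, hpf, hpa, hpa', hpb, hzp, hza, hza', hzb, hwz, hwa, hwa', hwb, Ne.symm hat, Ne.symm hau, Ne.symm haf, Ne.symm ha't, Ne.symm ha'f, Ne.symm ha'a, Ne.symm hbu, Ne.symm hbf, Ne.symm hba, Ne.symm hba', Ne.symm hbt, Ne.symm hpf, Ne.symm hpa, Ne.symm hpa', Ne.symm hpb, Ne.symm hzp, Ne.symm hza, Ne.symm hza', Ne.symm hzb, Ne.symm hwz, Ne.symm hwa, Ne.symm hwa', Ne.symm hwb]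
      intro haa
      rw [sat_all]
      intro aa' haaV'
      rw [sat_imp, sat_mem]
      simp only [Function.update_apply, eq_self_iff_true, if_true, if_false, hat, hau, haf, ha't, ha'f, ha'a, hbu, hbf, hba, hba', hbt, hpf, hpa, hpa', hpb, hzp, hza, hza', hzb, hwz, hwa, hwa', hwb, Ne.symm hat, Ne.symm hau, Ne.symm haf, Ne.symm ha't, Ne.symm ha'f, Ne.symm ha'a, Ne.symm hbu, Ne.symm hbf, Ne.symm hba, Ne.symm hba', Ne.symm hbt, Ne.symm hpf, Ne.symm hpa, Ne.symm hpa', Ne.symm hpb, Ne.symm hzp, Ne.symm hza, Ne.symm hza', Ne.symm hzb, Ne.symm hwz, Ne.symm hwa, Ne.symm hwa', Ne.symm hwb]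
      intro haa'
      rw [sat_all]
      intro bb hbbV
      rw [sat_imp, sat_and, sat_eq]
      rw [sat_memPairF hG hpf hpa hpb hzp hza hzb hwz hwa hwb
        (by simpa only [Function.update_apply, eq_self_iff_true, if_true, if_false, hat, hau, haf, ha't, ha'f, ha'a, hbu, hbf, hba, hba', hbt, hpf, hpa, hpa', hpb, hzp, hza, hza', hzb, hwz, hwa, hwa', hwb, Ne.symm hat, Ne.symm hau, Ne.symm haf, Ne.symm ha't, Ne.symm ha'f, Ne.symm ha'a, Ne.symm hbu, Ne.symm hbf, Ne.symm hba, Ne.symm hba', Ne.symm hbt, Ne.symm hpf, Ne.symm hpa, Ne.symm hpa', Ne.symm hpb, Ne.symm hzp, Ne.symm hza, Ne.symm hza', Ne.symm hzb, Ne.symm hwz, Ne.symm hwa, Ne.symm hwa', Ne.symm hwb] using hvf)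
        (by simpa only [Function.update_apply, eq_self_iff_true, if_true, if_false, hat, hau, haf, ha't, ha'f, ha'a, hbu, hbf, hba, hba', hbt, hpf, hpa, hpa', hpb, hzp, hza, hza', hzb, hwz, hwa, hwa', hwb, Ne.symm hat, Ne.symm hau, Ne.symm haf, Ne.symm ha't, Ne.symm ha'f, Ne.symm ha'a, Ne.symm hbu, Ne.symm hbf, Ne.symm hba, Ne.symm hba', Ne.symm hbt, Ne.symm hpf, Ne.symm hpa, Ne.symm hpa', Ne.symm hpb, Ne.symm hzp, Ne.symm hza, Ne.symm hza', Ne.symm hzb, Ne.symm hwz, Ne.symm hwa, Ne.symm hwa', Ne.symm hwb] using Vclass_trans hvt haa)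
        (by simpa only [Function.update_apply, eq_self_iff_true, if_true, if_false, hat, hau, haf, ha't, ha'f, ha'a, hbu, hbf, hba, hba', hbt, hpf, hpa, hpa', hpb, hzp, hza, hza', hzb, hwz, hwa, hwa', hwb, Ne.symm hat, Ne.symm hau, Ne.symm haf, Ne.symm ha't, Ne.symm ha'f, Ne.symm ha'a, Ne.symm hbu, Ne.symm hbf, Ne.symm hba, Ne.symm hba', Ne.symm hbt, Ne.symm hpf, Ne.symm hpa, Ne.symm hpa', Ne.symm hpb, Ne.symm hzp, Ne.symm hza, Ne.symm hza', Ne.symm hzb, Ne.symm hwz, Ne.symm hwa, Ne.symm hwa', Ne.symm hwb] using hbbV),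
        sat_memPairF hG hpf hpa' hpb hzp hza' hzb hwz hwa' hwb
        (by simpa only [Function.update_apply, eq_self_iff_true, if_true, if_false, hat, hau, haf, ha't, ha'f, ha'a, hbu, hbf, hba, hba', hbt, hpf, hpa, hpa', hpb, hzp, hza, hza', hzb, hwz, hwa, hwa', hwb, Ne.symm hat, Ne.symm hau, Ne.symm haf, Ne.symm ha't, Ne.symm ha'f, Ne.symm ha'a, Ne.symm hbu, Ne.symm hbf, Ne.symm hba, Ne.symm hba', Ne.symm hbt, Ne.symm hpf, Ne.symm hpa, Ne.symm hpa', Ne.symm hpb, Ne.symm hzp, Ne.symm hza, Ne.symm hza', Ne.symm hzb, Ne.symm hwz, Ne.symm hwa, Ne.symm hwa', Ne.symm hwb] using hvf)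
        (by simpa only [Function.update_apply, eq_self_iff_true, if_true, if_false, hat, hau, haf, ha't, ha'f, ha'a, hbu, hbf, hba, hba', hbt, hpf, hpa, hpa', hpb, hzp, hza, hza', hzb, hwz, hwa, hwa', hwb, Ne.symm hat, Ne.symm hau, Ne.symm haf, Ne.symm ha't, Ne.symm ha'f, Ne.symm ha'a, Ne.symm hbu, Ne.symm hbf, Ne.symm hba, Ne.symm hba', Ne.symm hbt, Ne.symm hpf, Ne.symm hpa, Ne.symm hpa', Ne.symm hpb, Ne.symm hzp, Ne.symm hza, Ne.symm hza', Ne.symm hzb, Ne.symm hwz, Ne.symm hwa, Ne.symm hwa', Ne.symm hwb] using Vclass_trans hvt haa')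
        (by simpa only [Function.update_apply, eq_self_iff_true, if_true, if_false, hat, hau, haf, ha't, ha'f, ha'a, hbu, hbf, hba, hba', hbt, hpf, hpa, hpa', hpb, hzp, hza, hza', hzb, hwz, hwa, hwa', hwb, Ne.symm hat, Ne.symm hau, Ne.symm haf, Ne.symm ha't, Ne.symm ha'f, Ne.symm ha'a, Ne.symm hbu, Ne.symm hbf, Ne.symm hba, Ne.symm hba', Ne.symm hbt, Ne.symm hpf, Ne.symm hpa, Ne.symm hpa', Ne.symm hpb, Ne.symm hzp, Ne.symm hza, Ne.symm hza', Ne.symm hzb, Ne.symm hwz, Ne.symm hwa, Ne.symm hwa', Ne.symm hwb] using hbbV)]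
      simp only [Function.update_apply, eq_self_iff_true, if_true, if_false, hat, hau, haf, ha't, ha'f, ha'a, hbu, hbf, hba, hba', hbt, hpf, hpa, hpa', hpb, hzp, hza, hza', hzb, hwz, hwa, hwa', hwb, Ne.symm hat, Ne.symm hau, Ne.symm haf, Ne.symm ha't, Ne.symm ha'f, Ne.symm ha'a, Ne.symm hbu, Ne.symm hbf, Ne.symm hba, Ne.symm hba', Ne.symm hbt, Ne.symm hpf, Ne.symm hpa, Ne.symm hpa', Ne.symm hpb, Ne.symm hzp, Ne.symm hza, Ne.symm hza', Ne.symm hzb, Ne.symm hwz, Ne.symm hwa, Ne.symm hwa', Ne.symm hwb]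
      rintro ⟨h1', h2'⟩
      exact H2 aa haa aa' haa' bb h1' h2'

/-- "there is no injection of `v t` into `v u`". -/
def notInjF (t u f a a' b p w z : ℕ) : SF := .not (.ex f (injF f t u a a' b p w z))

lemma sat_notInjF {β : Ordinal.{u}} (hG : GoodV β) {v : ℕ → ZFSet.{u}} {t u f a a' b p w z : ℕ}
    (hft : f ≠ t) (hfu : f ≠ u)
    (hat : a ≠ t) (hau : a ≠ u) (haf : a ≠ f)
    (ha't : a' ≠ t) (ha'f : a' ≠ f) (ha'a : a' ≠ a)
    (hbu : b ≠ u) (hbf : b ≠ f) (hba : b ≠ a) (hba' : b ≠ a') (hbt : b ≠ t)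
    (hpf : p ≠ f) (hpa : p ≠ a) (hpa' : p ≠ a') (hpb : p ≠ b)
    (hzp : z ≠ p) (hza : z ≠ a) (hza' : z ≠ a') (hzb : z ≠ b)
    (hwz : w ≠ z) (hwa : w ≠ a) (hwa' : w ≠ a') (hwb : w ≠ b)
    (hvt : v t ∈ Vclass β) (hvu : v u ∈ Vclass β) :
    Sat ∅ (· ∈ ·) (Vclass β) (notInjF t u f a a' b p w z) v ↔
      ¬ (#(v t).toSet ≤ #(v u).toSet) := by
  simp only [notInjF, sat_not, sat_ex]
  constructor
  · intro H hle
    rcases exists_injZ hle with ⟨ff, hff, hrank⟩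
    have hffV : ff ∈ Vclass β := lt_of_le_of_lt hrank (hG.max2 hvt hvu)
    refine H ⟨ff, hffV, ?_⟩
    rw [sat_injF hG hat hau haf ha't ha'f ha'a hbu hbf hba hba' hbt hpf hpa hpa' hpb
      hzp hza hza' hzb hwz hwa hwa' hwb
      (by simpa only [Function.update_apply, eq_self_iff_true, if_true, if_false, hat, hau, haf, ha't, ha'f, ha'a, hbu, hbf, hba, hba', hbt, hpf, hpa, hpa', hpb, hzp, hza, hza', hzb, hwz, hwa, hwa', hwb, hft, hfu, Ne.symm hat, Ne.symm hau, Ne.symm haf, Ne.symm ha't, Ne.symm ha'f, Ne.symm ha'a, Ne.symm hbu, Ne.symm hbf, Ne.symm hba, Ne.symm hba', Ne.symm hbt, Ne.symm hpf, Ne.symm hpa, Ne.symm hpa', Ne.symm hpb, Ne.symm hzp, Ne.symm hza, Ne.symm hza', Ne.symm hzb, Ne.symm hwz, Ne.symm hwa, Ne.symm hwa', Ne.symm hwb, Ne.symm hft, Ne.symm hfu] using hffV)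
      (by simpa only [Function.update_apply, eq_self_iff_true, if_true, if_false, hat, hau, haf, ha't, ha'f, ha'a, hbu, hbf, hba, hba', hbt, hpf, hpa, hpa', hpb, hzp, hza, hza', hzb, hwz, hwa, hwa', hwb, hft, hfu, Ne.symm hat, Ne.symm hau, Ne.symm haf, Ne.symm ha't, Ne.symm ha'f, Ne.symm ha'a, Ne.symm hbu, Ne.symm hbf, Ne.symm hba, Ne.symm hba', Ne.symm hbt, Ne.symm hpf, Ne.symm hpa, Ne.symm hpa', Ne.symm hpb, Ne.symm hzp, Ne.symm hza, Ne.symm hza', Ne.symm hzb, Ne.symm hwz, Ne.symm hwa, Ne.symm hwa', Ne.symm hwb, Ne.symm hft, Ne.symm hfu] using hvt)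
      (by simpa only [Function.update_apply, eq_self_iff_true, if_true, if_false, hat, hau, haf, ha't, ha'f, ha'a, hbu, hbf, hba, hba', hbt, hpf, hpa, hpa', hpb, hzp, hza, hza', hzb, hwz, hwa, hwa', hwb, hft, hfu, Ne.symm hat, Ne.symm hau, Ne.symm haf, Ne.symm ha't, Ne.symm ha'f, Ne.symm ha'a, Ne.symm hbu, Ne.symm hbf, Ne.symm hba, Ne.symm hba', Ne.symm hbt, Ne.symm hpf, Ne.symm hpa, Ne.symm hpa', Ne.symm hpb, Ne.symm hzp, Ne.symm hza, Ne.symm hza', Ne.symm hzb, Ne.symm hwz, Ne.symm hwa, Ne.symm hwa', Ne.symm hwb, Ne.symm hft, Ne.symm hfu] using hvu)]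
    simpa only [Function.update_apply, eq_self_iff_true, if_true, if_false, hat, hau, haf, ha't, ha'f, ha'a, hbu, hbf, hba, hba', hbt, hpf, hpa, hpa', hpb, hzp, hza, hza', hzb, hwz, hwa, hwa', hwb, hft, hfu, Ne.symm hat, Ne.symm hau, Ne.symm haf, Ne.symm ha't, Ne.symm ha'f, Ne.symm ha'a, Ne.symm hbu, Ne.symm hbf, Ne.symm hba, Ne.symm hba', Ne.symm hbt, Ne.symm hpf, Ne.symm hpa, Ne.symm hpa', Ne.symm hpb, Ne.symm hzp, Ne.symm hza, Ne.symm hza', Ne.symm hzb, Ne.symm hwz, Ne.symm hwa, Ne.symm hwa', Ne.symm hwb, Ne.symm hft, Ne.symm hfu] using hff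
  · rintro H ⟨ff, hffV, hsat⟩
    rw [sat_injF hG hat hau haf ha't ha'f ha'a hbu hbf hba hba' hbt hpf hpa hpa' hpb
      hzp hza hza' hzb hwz hwa hwa' hwb
      (by simpa only [Function.update_apply, eq_self_iff_true, if_true, if_false, hat, hau, haf, ha't, ha'f, ha'a, hbu, hbf, hba, hba', hbt, hpf, hpa, hpa', hpb, hzp, hza, hza', hzb, hwz, hwa, hwa', hwb, hft, hfu, Ne.symm hat, Ne.symm hau, Ne.symm haf, Ne.symm ha't, Ne.symm ha'f, Ne.symm ha'a, Ne.symm hbu, Ne.symm hbf, Ne.symm hba, Ne.symm hba', Ne.symm hbt, Ne.symm hpf, Ne.symm hpa, Ne.symm hpa', Ne.symm hpb, Ne.symm hzp, Ne.symm hza, Ne.symm hza', Ne.symm hzb, Ne.symm hwz, Ne.symm hwa, Ne.symm hwa', Ne.symm hwb, Ne.symm hft, Ne.symm hfu] using hffV)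
      (by simpa only [Function.update_apply, eq_self_iff_true, if_true, if_false, hat, hau, haf, ha't, ha'f, ha'a, hbu, hbf, hba, hba', hbt, hpf, hpa, hpa', hpb, hzp, hza, hza', hzb, hwz, hwa, hwa', hwb, hft, hfu, Ne.symm hat, Ne.symm hau, Ne.symm haf, Ne.symm ha't, Ne.symm ha'f, Ne.symm ha'a, Ne.symm hbu, Ne.symm hbf, Ne.symm hba, Ne.symm hba', Ne.symm hbt, Ne.symm hpf, Ne.symm hpa, Ne.symm hpa', Ne.symm hpb, Ne.symm hzp, Ne.symm hza, Ne.symm hza', Ne.symm hzb, Ne.symm hwz, Ne.symm hwa, Ne.symm hwa', Ne.symm hwb, Ne.symm hft, Ne.symm hfu] using hvt)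
      (by simpa only [Function.update_apply, eq_self_iff_true, if_true, if_false, hat, hau, haf, ha't, ha'f, ha'a, hbu, hbf, hba, hba', hbt, hpf, hpa, hpa', hpb, hzp, hza, hza', hzb, hwz, hwa, hwa', hwb, hft, hfu, Ne.symm hat, Ne.symm hau, Ne.symm haf, Ne.symm ha't, Ne.symm ha'f, Ne.symm ha'a, Ne.symm hbu, Ne.symm hbf, Ne.symm hba, Ne.symm hba', Ne.symm hbt, Ne.symm hpf, Ne.symm hpa, Ne.symm hpa', Ne.symm hpb, Ne.symm hzp, Ne.symm hza, Ne.symm hza', Ne.symm hzb, Ne.symm hwz, Ne.symm hwa, Ne.symm hwa', Ne.symm hwb, Ne.symm hft, Ne.symm hfu] using hvu)] at hsat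
    simp only [Function.update_apply, eq_self_iff_true, if_true, if_false, hat, hau, haf, ha't, ha'f, ha'a, hbu, hbf, hba, hba', hbt, hpf, hpa, hpa', hpb, hzp, hza, hza', hzb, hwz, hwa, hwa', hwb, hft, hfu, Ne.symm hat, Ne.symm hau, Ne.symm haf, Ne.symm ha't, Ne.symm ha'f, Ne.symm ha'a, Ne.symm hbu, Ne.symm hbf, Ne.symm hba, Ne.symm hba', Ne.symm hbt, Ne.symm hpf, Ne.symm hpa, Ne.symm hpa', Ne.symm hpb, Ne.symm hzp, Ne.symm hza, Ne.symm hza', Ne.symm hzb, Ne.symm hwz, Ne.symm hwa, Ne.symm hwa', Ne.symm hwb, Ne.symm hft, Ne.symm hfu] at hsat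
    exact H hsat.card_le

end Forms3

section Forms4

open ZFSet Ordinal Order Cardinal

/-- `v x` is a von Neumann ordinal. -/
def ordF (x a b c : ℕ) : SF :=
  (transF x a b).and (SF.all a ((SF.mem a x).imp (transF a b c)))

lemma sat_ordF {β : Ordinal.{u}} {v : ℕ → ZFSet.{u}} {x a b c : ℕ}
    (hax : a ≠ x) (hba : b ≠ a) (hbx : b ≠ x) (hcb : c ≠ b) (hca : c ≠ a)
    (hvx : v x ∈ Vclass β) :
    Sat ∅ (· ∈ ·) (Vclass β) (ordF x a b c) v ↔ ZOrd (v x) := by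
  rw [ordF, sat_and, sat_transF hax hba hbx hvx, ZOrd]
  refine and_congr_right fun _ => ?_
  rw [sat_all]
  constructor
  · intro H y hy
    have hyV : y ∈ Vclass β := Vclass_trans hvx hy
    have h1 := H y hyV
    rw [sat_imp, sat_mem] at h1
    simp only [Function.update_apply, eq_self_iff_true, if_true, if_false,
      hax, Ne.symm hax] at h1
    have h2 := h1 hy
    rw [sat_transF hba hcb hca (by
      simpa only [Function.update_apply, eq_self_iff_true, if_true] using hyV)] at h2
    simpa only [Function.update_apply, eq_self_iff_true, if_true] using h2
  · intro H y hyV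
    rw [sat_imp, sat_mem]
    simp only [Function.update_apply, eq_self_iff_true, if_true, if_false, hax, Ne.symm hax]
    intro hy
    rw [sat_transF hba hcb hca (by
      simpa only [Function.update_apply, eq_self_iff_true, if_true] using hyV)]
    simpa only [Function.update_apply, eq_self_iff_true, if_true] using H y hy

/-- `v x` is a cardinal; `n` is a base for auxiliary variables (requires `x ≤ n`). -/
def cardF (x n : ℕ) : SF :=
  (ordF x (n+1) (n+2) (n+3)).and
    (SF.all (n+1) ((SF.mem (n+1) x).imp
      (notInjF x (n+1) (n+2) (n+3) (n+4) (n+5) (n+6) (n+7) (n+8))))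

lemma sat_cardF {β : Ordinal.{u}} (hG : GoodV β) {v : ℕ → ZFSet.{u}} {x n : ℕ}
    (hxn : x ≤ n) (hvx : v x ∈ Vclass β) :
    Sat ∅ (· ∈ ·) (Vclass β) (cardF x n) v ↔ ZCard (v x) := by
  have hx1 : x ≠ n + 1 := by omega
  rw [cardF, sat_and, sat_ordF (by omega) (by omega) (by omega) (by omega) (by omega) hvx,
    ZCard]
  refine and_congr_right fun _ => ?_
  rw [sat_all]
  constructor
  · intro H g hg
    have hgV : g ∈ Vclass β := Vclass_trans hvx hg
    have h1 := H g hgV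
    rw [sat_imp, sat_mem] at h1
    simp only [Function.update_apply, eq_self_iff_true, if_true, if_false,
      hx1] at h1
    have h2 := h1 hg
    rw [sat_notInjF hG (by omega) (by omega) (by omega) (by omega) (by omega) (by omega)
      (by omega) (by omega) (by omega) (by omega) (by omega) (by omega) (by omega)
      (by omega) (by omega) (by omega) (by omega) (by omega) (by omega) (by omega)
      (by omega) (by omega) (by omega) (by omega) (by omega)
      (by simpa only [Function.update_apply, hx1, if_false] using hvx)
      (by simpa only [Function.update_apply, eq_self_iff_true, if_true] using hgV)] at h2
    simp only [Function.update_apply, eq_self_iff_true, if_true,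
      hx1] at h2
    exact not_le.1 h2
  · intro H g hgV
    rw [sat_imp, sat_mem]
    simp only [Function.update_apply, eq_self_iff_true, if_true, if_false,
      hx1]
    intro hg
    rw [sat_notInjF hG (by omega) (by omega) (by omega) (by omega) (by omega) (by omega)
      (by omega) (by omega) (by omega) (by omega) (by omega) (by omega) (by omega)
      (by omega) (by omega) (by omega) (by omega) (by omega) (by omega) (by omega)
      (by omega) (by omega) (by omega) (by omega) (by omega)
      (by simpa only [Function.update_apply, hx1, if_false] using hvx)
      (by simpa only [Function.update_apply, eq_self_iff_true, if_true] using hgV)]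
    simp only [Function.update_apply, eq_self_iff_true, if_true,
      hx1]
    exact not_le.2 (H g hg)

/-- `v k ∈ H(v m)`; requires `k < m`. -/
def hpredF (k m : ℕ) : SF :=
  .ex (m+1) ((transF (m+1) (m+3) (m+5)).and ((subF k (m+1) (m+3)).and
    (notInjF m (m+1) (m+2) (m+3) (m+4) (m+5) (m+6) (m+7) (m+8))))

lemma sat_hpredF {β : Ordinal.{u}} (hG : GoodV β) {v : ℕ → ZFSet.{u}} {k m : ℕ}
    (hkm : k < m) (hvk : v k ∈ Vclass β) (hvm : v m ∈ Vclass β) :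
    Sat ∅ (· ∈ ·) (Vclass β) (hpredF k m) v ↔ v k ∈ HSet (v m) := by
  have hk1 : k ≠ m + 1 := by omega
  have hm1 : m ≠ m + 1 := by omega
  rw [hpredF, sat_ex]
  constructor
  · rintro ⟨uu, huuV, hsat⟩
    rw [sat_and, sat_and] at hsat
    rcases hsat with ⟨h1, h2, h3⟩
    rw [sat_transF (by omega) (by omega) (by omega)
      (by simpa only [Function.update_apply, eq_self_iff_true, if_true] using huuV)] at h1
    rw [sat_subF (by omega) (by omega)
      (by simpa only [Function.update_apply, hk1, if_false] using hvk)] at h2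
    rw [sat_notInjF hG (by omega) (by omega) (by omega) (by omega) (by omega) (by omega)
      (by omega) (by omega) (by omega) (by omega) (by omega) (by omega) (by omega)
      (by omega) (by omega) (by omega) (by omega) (by omega) (by omega) (by omega)
      (by omega) (by omega) (by omega) (by omega) (by omega)
      (by simpa only [Function.update_apply, hm1, if_false] using hvm)
      (by simpa only [Function.update_apply, eq_self_iff_true, if_true] using huuV)] at h3
    simp only [Function.update_apply, eq_self_iff_true, if_true,
      hk1, hm1] at h1 h2 h3
    exact ⟨uu, h1, h2, not_le.1 h3⟩
  · rintro ⟨t', ht'_trans, hsub, hlt⟩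
    refine ⟨TCl (v k), ?_, ?_⟩
    · rw [mem_Vclass]
      exact lt_of_le_of_lt rank_TCl_le hvk
    · rw [sat_and, sat_and]
      have hTV : TCl (v k) ∈ Vclass β := by
        rw [mem_Vclass]; exact lt_of_le_of_lt rank_TCl_le hvk
      refine ⟨?_, ?_, ?_⟩
      · rw [sat_transF (by omega) (by omega) (by omega)
          (by simpa only [Function.update_apply, eq_self_iff_true, if_true] using hTV)]
        simp only [Function.update_apply, eq_self_iff_true, if_true]
        exact TCl_transitive _
      · rw [sat_subF (by omega) (by omega)
          (by simpa only [Function.update_apply, hk1, if_false] using hvk)]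
        simp only [Function.update_apply, eq_self_iff_true, if_true,
          hk1]
        exact subset_TCl
      · rw [sat_notInjF hG (by omega) (by omega) (by omega) (by omega) (by omega) (by omega)
          (by omega) (by omega) (by omega) (by omega) (by omega) (by omega) (by omega)
          (by omega) (by omega) (by omega) (by omega) (by omega) (by omega) (by omega)
          (by omega) (by omega) (by omega) (by omega) (by omega)
          (by simpa only [Function.update_apply, hm1, if_false] using hvm)
          (by simpa only [Function.update_apply, eq_self_iff_true, if_true] using hTV)]
        simp only [Function.update_apply, eq_self_iff_true, if_true,
          hm1]
        intro hle
        have h1 : TCl (v k) ⊆ t' := TCl_subset ht'_trans hsub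
        have h2 : #(TCl (v k)).toSet ≤ #t'.toSet :=
          Cardinal.mk_le_mk_of_subset (fun z hz => h1 hz)
        exact absurd (lt_of_le_of_lt (hle.trans h2) hlt) (lt_irrefl _)
  
end Forms4

section Rel

open ZFSet Ordinal Order Cardinal

/-- A bound on all variables (free or bound) occurring in a formula. -/
def SF.vb : SF → ℕ
  | .mem i j => max i j + 1
  | .eq i j => max i j + 1
  | .pred i => i + 1
  | .not φ => φ.vb
  | .and φ ψ => max φ.vb ψ.vb
  | .ex k φ => max (k + 1) φ.vb

/-- Relativization of a formula to `H(v N)`. -/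
def SF.relN (N : ℕ) : SF → SF
  | .ex k φ => .ex k ((hpredF k N).and (φ.relN N))
  | .not φ => .not (φ.relN N)
  | .and φ ψ => .and (φ.relN N) (ψ.relN N)
  | .mem i j => .mem i j
  | .eq i j => .eq i j
  | .pred i => .pred i

lemma fv_mem_lt_vb : ∀ (φ : SF) (i : ℕ), i ∈ φ.fv → i < φ.vb
  | .mem i j, l, h => by simp [SF.fv] at h; simp [SF.vb]; omega
  | .eq i j, l, h => by simp [SF.fv] at h; simp [SF.vb]; omega
  | .pred i, l, h => by simp [SF.fv] at h; simp [SF.vb]; omega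
  | .not φ, l, h => fv_mem_lt_vb φ l h
  | .and φ ψ, l, h => by
      rcases h with h | h
      · exact lt_of_lt_of_le (fv_mem_lt_vb φ l h) (le_max_left _ _)
      · exact lt_of_lt_of_le (fv_mem_lt_vb ψ l h) (le_max_right _ _)
  | .ex k φ, l, h => lt_of_lt_of_le (fv_mem_lt_vb φ l h.1) (le_max_right _ _)

lemma sat_relN {β : Ordinal.{u}} (hG : GoodV β) :
    ∀ (φ : SF) (N : ℕ) (v : ℕ → ZFSet.{u}), φ.vb ≤ N → v N ∈ Vclass β →
      HSet (v N) ⊆ Vclass β →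
      (Sat ∅ (· ∈ ·) (Vclass β) (φ.relN N) v ↔ Sat ∅ (· ∈ ·) (HSet (v N)) φ v)
  | .mem i j, N, v, _, _, _ => Iff.rfl
  | .eq i j, N, v, _, _, _ => Iff.rfl
  | .pred i, N, v, _, _, _ => Iff.rfl
  | .not φ, N, v, hvb, hvN, hsub => by
      rw [SF.relN, sat_not, sat_not, sat_relN hG φ N v hvb hvN hsub]
  | .and φ ψ, N, v, hvb, hvN, hsub => by
      rw [SF.vb] at hvb
      rw [SF.relN, sat_and, sat_and, sat_relN hG φ N v (le_trans (le_max_left _ _) hvb) hvN hsub,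
        sat_relN hG ψ N v (le_trans (le_max_right _ _) hvb) hvN hsub]
  | .ex k φ, N, v, hvb, hvN, hsub => by
      rw [SF.vb] at hvb
      have hkN : k < N := lt_of_lt_of_le (by omega : k < max (k+1) φ.vb) hvb
      have hNk : N ≠ k := by omega
      rw [SF.relN, sat_ex, sat_ex]
      constructor
      · rintro ⟨x, hxV, hsat⟩
        rw [sat_and] at hsat
        rcases hsat with ⟨h1, h2⟩
        rw [sat_hpredF hG hkN (by simpa only [Function.update_apply, eq_self_iff_true,
          if_true] using hxV) (by simpa only [Function.update_apply, hNk, if_false] using hvN)] at h1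
        simp only [Function.update_apply, eq_self_iff_true, if_true, hNk, if_false] at h1
        have hupd : Function.update v k x N = v N := Function.update_of_ne hNk _ _
        rw [sat_relN hG φ N (Function.update v k x) (le_trans (le_max_right _ _) hvb)
          (by rwa [hupd]) (by rwa [hupd]), hupd] at h2
        exact ⟨x, h1, h2⟩
      · rintro ⟨x, hxH, hsat⟩
        have hxV : x ∈ Vclass β := hsub hxH
        refine ⟨x, hxV, ?_⟩
        rw [sat_and]
        have hupd : Function.update v k x N = v N := Function.update_of_ne hNk _ _
        constructor
        · rw [sat_hpredF hG hkN (by simpa only [Function.update_apply, eq_self_iff_true,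
            if_true] using hxV) (by simpa only [Function.update_apply, hNk, if_false] using hvN)]
          simpa only [Function.update_apply, eq_self_iff_true, if_true, hNk, if_false] using hxH
        · rw [sat_relN hG φ N (Function.update v k x) (le_trans (le_max_right _ _) hvb)
            (by rwa [hupd]) (by rwa [hupd]), hupd]
          exact hsat

lemma fv_transF {x a b : ℕ} : (transF x a b).fv ⊆ {x} := by
  intro i hi
  simp [transF, SF.fv] at hi
  simp only [Set.mem_singleton_iff]
  omega

lemma fv_subF {x y a : ℕ} : (subF x y a).fv ⊆ {x, y} := by
  intro i hi
  simp [subF, SF.fv] at hi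
  simp only [Set.mem_insert_iff, Set.mem_singleton_iff]
  omega

lemma fv_singF {z a w : ℕ} : (singF z a w).fv ⊆ {z, a} := by
  intro i hi
  simp [singF, SF.fv] at hi
  simp only [Set.mem_insert_iff, Set.mem_singleton_iff]
  omega

lemma fv_pairF {z a b w : ℕ} : (pairF z a b w).fv ⊆ {z, a, b} := by
  intro i hi
  simp [pairF, SF.fv] at hi
  simp only [Set.mem_insert_iff, Set.mem_singleton_iff]
  omega

lemma fv_pairEqF {p a b w z : ℕ} : (pairEqF p a b w z).fv ⊆ {p, a, b} := by
  intro i hi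
  rw [pairEqF, fv_all, fv_iff, fv_or] at hi
  rcases hi with ⟨hi | hi | hi, hne⟩
  · simp [SF.fv] at hi
    simp only [Set.mem_insert_iff, Set.mem_singleton_iff] at *
    omega
  · have := fv_singF hi
    simp only [Set.mem_insert_iff, Set.mem_singleton_iff] at *
    omega
  · have := fv_pairF hi
    simp only [Set.mem_insert_iff, Set.mem_singleton_iff] at *
    omega

lemma fv_memPairF {f a b p w z : ℕ} : (memPairF f a b p w z).fv ⊆ {f, a, b} := by
  intro i hi
  rw [memPairF, SF.fv, SF.fv] at hi
  rcases hi with ⟨hi | hi, hne⟩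
  · simp [SF.fv] at hi
    simp only [Set.mem_insert_iff, Set.mem_singleton_iff] at *
    omega
  · have := fv_pairEqF hi
    simp only [Set.mem_insert_iff, Set.mem_singleton_iff] at *
    omega

lemma fv_injF {f t u a a' b p w z : ℕ} : (injF f t u a a' b p w z).fv ⊆ {f, t, u} := by
  intro i hi
  rw [injF, SF.fv] at hi
  simp only [Set.mem_insert_iff, Set.mem_singleton_iff]
  rcases hi with hi | hi
  · rw [fv_all, fv_imp] at hi
    obtain ⟨hi, hnea⟩ := hi
    simp only [Set.mem_singleton_iff] at hnea
    rcases hi with hi | hi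
    · simp [SF.fv] at hi
      omega
    · rw [SF.fv] at hi
      rcases hi with ⟨hi, hneb⟩
      simp only [Set.mem_singleton_iff] at hneb
      rcases hi with hi | hi
      · simp [SF.fv] at hi
        omega
      · have := fv_memPairF hi
        simp only [Set.mem_insert_iff, Set.mem_singleton_iff] at this
        omega
  · rw [fv_all, fv_imp] at hi
    obtain ⟨hi, hnea⟩ := hi
    simp only [Set.mem_singleton_iff] at hnea
    rcases hi with hi | hi
    · simp [SF.fv] at hi
      omega
    · rw [fv_all, fv_imp] at hi
      obtain ⟨hi, hnea'⟩ := hi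
      simp only [Set.mem_singleton_iff] at hnea'
      rcases hi with hi | hi
      · simp [SF.fv] at hi
        omega
      · rw [fv_all, fv_imp] at hi
        obtain ⟨hi, hneb⟩ := hi
        simp only [Set.mem_singleton_iff] at hneb
        rcases hi with hi | hi
        · rw [SF.fv] at hi
          rcases hi with hi | hi
          · have := fv_memPairF hi
            simp only [Set.mem_insert_iff, Set.mem_singleton_iff] at this
            omega
          · have := fv_memPairF hi
            simp only [Set.mem_insert_iff, Set.mem_singleton_iff] at this
            omega
        · simp [SF.fv] at hi
          omega

lemma fv_notInjF {t u f a a' b p w z : ℕ} : (notInjF t u f a a' b p w z).fv ⊆ {t, u} := by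
  intro i hi
  rw [notInjF, SF.fv, SF.fv] at hi
  rcases hi with ⟨hi, hne⟩
  have := fv_injF hi
  simp only [Set.mem_insert_iff, Set.mem_singleton_iff] at *
  omega

lemma fv_ordF {x a b c : ℕ} : (ordF x a b c).fv ⊆ {x} := by
  intro i hi
  simp [ordF, transF, SF.fv] at hi
  simp only [Set.mem_singleton_iff]
  omega

lemma fv_cardF {x n : ℕ} : (cardF x n).fv ⊆ {x} := by
  intro i hi
  rw [cardF, SF.fv] at hi
  rcases hi with hi | hi
  · exact fv_ordF hi
  · rw [fv_all] at hi
    rcases hi with ⟨hi, hne⟩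
    rcases hi with hi | hi
    · simp [SF.fv] at hi
      simp only [Set.mem_singleton_iff]
      simp only [Set.mem_singleton_iff] at hne
      omega
    · have := fv_notInjF hi
      simp only [Set.mem_insert_iff, Set.mem_singleton_iff] at this ⊢
      simp only [Set.mem_singleton_iff] at hne
      omega

lemma fv_hpredF {k m : ℕ} : (hpredF k m).fv ⊆ {k, m} := by
  intro i hi
  rw [hpredF, SF.fv] at hi
  rcases hi with ⟨hi, hne⟩
  simp only [Set.mem_singleton_iff] at hne
  rcases hi with hi | hi | hi
  · have := fv_transF hi
    simp only [Set.mem_singleton_iff] at this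
    simp only [Set.mem_insert_iff, Set.mem_singleton_iff]
    omega
  · have := fv_subF hi
    simp only [Set.mem_insert_iff, Set.mem_singleton_iff] at this ⊢
    omega
  · have := fv_notInjF hi
    simp only [Set.mem_insert_iff, Set.mem_singleton_iff] at this ⊢
    omega

lemma fv_relN : ∀ (φ : SF) (N : ℕ), (φ.relN N).fv ⊆ φ.fv ∪ {N}
  | .mem i j, N => by rw [SF.relN]; exact Set.subset_union_left
  | .eq i j, N => by rw [SF.relN]; exact Set.subset_union_left
  | .pred i, N => by rw [SF.relN]; exact Set.subset_union_left
  | .not φ, N => by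
      rw [SF.relN]
      exact fv_relN φ N
  | .and φ ψ, N => by
      rw [SF.relN]
      intro i hi
      rcases hi with hi | hi
      · rcases fv_relN φ N hi with h | h
        · exact Or.inl (Or.inl h)
        · exact Or.inr h
      · rcases fv_relN ψ N hi with h | h
        · exact Or.inl (Or.inr h)
        · exact Or.inr h
  | .ex k φ, N => by
      rw [SF.relN]
      intro i hi
      rcases hi with ⟨hi, hne⟩
      rcases hi with hi | hi
      · rcases fv_hpredF hi with h | h
        · exact absurd h hne
        · exact Or.inr h
      · rcases fv_relN φ N hi with h | h
        · exact Or.inl ⟨h, hne⟩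
        · exact Or.inr h

end Rel

section NatOmega

open ZFSet Ordinal Order Cardinal

/-- The `n`-th von Neumann natural as a `ZFSet`. -/
def natZ : ℕ → ZFSet.{u}
  | 0 => ∅
  | n + 1 => insert (natZ n) (natZ n)

lemma mk_ofNat : ∀ n : ℕ, (ZFSet.mk (PSet.ofNat n) : ZFSet.{u}) = natZ n
  | 0 => rfl
  | n + 1 => by
    have : (ZFSet.mk (PSet.ofNat (n + 1)) : ZFSet.{u}) =
        insert (ZFSet.mk (PSet.ofNat n)) (ZFSet.mk (PSet.ofNat n)) := rfl
    rw [this, mk_ofNat n, natZ]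

lemma mem_omega_ex {x : ZFSet.{u}} (hx : x ∈ ZFSet.omega) : ∃ n : ℕ, x = natZ n := by
  induction x using Quotient.inductionOn with
  | _ px =>
    rcases hx with ⟨⟨n⟩, he⟩
    exact ⟨n, (Quotient.sound he).trans (mk_ofNat n)⟩

lemma ZOrd_empty : ZOrd (∅ : ZFSet.{u}) :=
  ⟨ZFSet.isTransitive_empty, fun y hy => absurd hy (ZFSet.notMem_empty y)⟩

lemma ZOrd_succZ {x : ZFSet.{u}} (h : ZOrd x) : ZOrd (insert x x) := by
  constructor
  · intro y hy
    rcases ZFSet.mem_insert_iff.1 hy with rfl | hy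
    · intro z hz; exact ZFSet.mem_insert_of_mem _ hz
    · intro z hz; exact ZFSet.mem_insert_of_mem _ (h.1.mem_trans hz hy)
  · intro y hy
    rcases ZFSet.mem_insert_iff.1 hy with rfl | hy
    · exact h.1
    · exact (h.mem hy).1

lemma ZOrd_natZ : ∀ n : ℕ, ZOrd (natZ n : ZFSet.{u})
  | 0 => ZOrd_empty
  | n + 1 => ZOrd_succZ (ZOrd_natZ n)

lemma rank_insert_self {x : ZFSet.{u}} : rank (insert x x) = succ (rank x) := by
  rw [ZFSet.rank_insert]
  exact max_eq_left (by
    rw [ZFSet.rank_le_iff]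
    intro y hy
    exact lt_succ_of_le (ZFSet.rank_lt_of_mem hy).le)

lemma rank_natZ : ∀ n : ℕ, rank (natZ n : ZFSet.{u}) = n
  | 0 => ZFSet.rank_empty
  | n + 1 => by
    rw [natZ, rank_insert_self, rank_natZ n, Nat.cast_succ, add_one_eq_succ]

/-- Iterated successor on ZFC sets, starting from `θ`. -/
def succIter (θ : ZFSet.{u}) : ℕ → ZFSet.{u}
  | 0 => θ
  | n + 1 => insert (succIter θ n) (succIter θ n)

lemma ZOrd_succIter {θ : ZFSet.{u}} (hθ : ZOrd θ) : ∀ n, ZOrd (succIter θ n)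
  | 0 => hθ
  | n + 1 => ZOrd_succZ (ZOrd_succIter hθ n)

lemma rank_succIter {θ : ZFSet.{u}} : ∀ n : ℕ, rank (succIter θ n) = rank θ + n
  | 0 => by simp [succIter]
  | n + 1 => by
    rw [succIter, rank_insert_self, rank_succIter n, Nat.cast_succ, ← add_one_eq_succ,
      add_assoc]

/-- A von Neumann ordinal of rank `rank θ + ω`. -/
noncomputable def alphaZ (θ : ZFSet.{u}) : ZFSet.{u} :=
  ⋃₀ ZFSet.range (fun n : ULift.{u} ℕ => succIter θ n.down)

lemma mem_alphaZ {θ x : ZFSet.{u}} : x ∈ alphaZ θ ↔ ∃ n : ℕ, x ∈ succIter θ n := by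
  simp only [alphaZ, ZFSet.mem_sUnion, ZFSet.mem_range]
  constructor
  · rintro ⟨w, ⟨n, rfl⟩, hx⟩
    exact ⟨n.down, hx⟩
  · rintro ⟨n, hx⟩
    exact ⟨succIter θ n, ⟨⟨n⟩, rfl⟩, hx⟩

lemma ZOrd_alphaZ {θ : ZFSet.{u}} (hθ : ZOrd θ) : ZOrd (alphaZ θ) := by
  constructor
  · intro y hy z hz
    rcases mem_alphaZ.1 hy with ⟨n, hn⟩
    exact mem_alphaZ.2 ⟨n, ((ZOrd_succIter hθ n).1).mem_trans hz hn⟩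
  · intro y hy
    rcases mem_alphaZ.1 hy with ⟨n, hn⟩
    exact ((ZOrd_succIter hθ n).mem hn).1

lemma rank_alphaZ {θ : ZFSet.{u}} : rank (alphaZ θ) = rank θ + omega0 := by
  apply le_antisymm
  · rw [ZFSet.rank_le_iff]
    intro y hy
    rcases mem_alphaZ.1 hy with ⟨n, hn⟩
    calc rank y < rank (succIter θ n) := ZFSet.rank_lt_of_mem hn
    _ = rank θ + n := rank_succIter n
    _ < rank θ + omega0 := add_lt_add_right (nat_lt_omega0 n) _
  · rw [add_le_iff_of_isSuccLimit isSuccLimit_omega0]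
    intro b hb
    rcases lt_omega0.1 hb with ⟨n, rfl⟩
    have h1 : succIter θ n ∈ alphaZ θ :=
      mem_alphaZ.2 ⟨n + 1, ZFSet.mem_insert _ _⟩
    calc rank θ + (n : Ordinal) = rank (succIter θ n) := (rank_succIter n).symm
    _ ≤ rank (alphaZ θ) := (ZFSet.rank_lt_of_mem h1).le

lemma goodV_of_base_omega {base : Ordinal.{u}} : GoodV (base + omega0) := by
  intro x hx
  rcases (lt_add_iff omega0_ne_zero).1 hx with ⟨d, hd, hle⟩
  rcases lt_omega0.1 hd with ⟨n, rfl⟩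
  have key : ∀ m : ℕ, base + (m : Ordinal) + 1 = base + ((m + 1 : ℕ) : Ordinal) := by
    intro m
    rw [Nat.cast_succ, ← add_assoc]
  have step : ∀ (δ : Ordinal) (m : ℕ), δ ≤ base + (m : Ordinal) →
      succ δ ≤ base + ((m + 1 : ℕ) : Ordinal) := by
    intro δ m h
    rw [← key m, ← add_one_eq_succ]
    exact add_le_add_left h 1
  have s1 := step _ n hle
  have s2 := step _ (n+1) s1
  have s3 := step _ (n+2) s2
  have s4 := step _ (n+3) s3
  have s5 := step _ (n+4) s4
  exact lt_of_le_of_lt s5 (add_lt_add_right (nat_lt_omega0 _) _)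

end NatOmega

section Psi

open ZFSet Ordinal Order Cardinal

/-- The carrier contains `v 1`. -/
def clVF (c : ℕ) : SF := .ex c (.eq c 1)

lemma sat_clVF {β : Ordinal.{u}} {v : ℕ → ZFSet.{u}} {c : ℕ} (hc : c ≠ 1) :
    Sat ∅ (· ∈ ·) (Vclass β) (clVF c) v ↔ v 1 ∈ Vclass β := by
  rw [clVF, sat_ex]
  constructor
  · rintro ⟨x, hxV, hsat⟩
    rw [sat_eq] at hsat
    simp only [Function.update_apply, eq_self_iff_true, if_true, Ne.symm hc, if_false] at hsat
    rwa [← hsat]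
  · intro h
    refine ⟨v 1, h, ?_⟩
    rw [sat_eq]
    simp only [Function.update_apply, eq_self_iff_true, if_true, Ne.symm hc, if_false]

lemma fv_clVF {c : ℕ} : (clVF c).fv ⊆ {1} := by
  intro i hi
  simp [clVF, SF.fv] at hi
  simp only [Set.mem_singleton_iff]
  omega

/-- Every member of the carrier is 5 levels below the top. -/
def cl5F (n : ℕ) : SF :=
  SF.all (n+1) (SF.ex (n+2) (SF.and (SF.mem (n+1) (n+2)) (SF.ex (n+3) (SF.and
    (SF.mem (n+2) (n+3)) (SF.ex (n+4) (SF.and (SF.mem (n+3) (n+4)) (SF.ex (n+5) (SF.and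
    (SF.mem (n+4) (n+5)) (SF.ex (n+6) (SF.mem (n+5) (n+6)))))))))))

lemma fv_cl5F {n : ℕ} : (cl5F n).fv ⊆ (∅ : Set ℕ) := by
  intro i hi
  simp [cl5F, SF.fv] at hi

lemma goodV_of_cl5 {β : Ordinal.{u}} {v : ℕ → ZFSet.{u}} {n : ℕ}
    (h : Sat ∅ (· ∈ ·) (Vclass β) (cl5F n) v) : GoodV β := by
  intro x hx
  have e12 : n+1 ≠ n+2 := by omega
  have e13 : n+1 ≠ n+3 := by omega
  have e14 : n+1 ≠ n+4 := by omega
  have e15 : n+1 ≠ n+5 := by omega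
  have e16 : n+1 ≠ n+6 := by omega
  have e23 : n+2 ≠ n+3 := by omega
  have e24 : n+2 ≠ n+4 := by omega
  have e25 : n+2 ≠ n+5 := by omega
  have e26 : n+2 ≠ n+6 := by omega
  have e34 : n+3 ≠ n+4 := by omega
  have e35 : n+3 ≠ n+5 := by omega
  have e36 : n+3 ≠ n+6 := by omega
  have e45 : n+4 ≠ n+5 := by omega
  have e46 : n+4 ≠ n+6 := by omega
  have e56 : n+5 ≠ n+6 := by omega
  rw [cl5F, sat_all] at h
  have h1 := h x hx
  rw [sat_ex] at h1
  rcases h1 with ⟨y1, hy1, h1⟩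
  rw [sat_and, sat_mem, sat_ex] at h1
  rcases h1 with ⟨m1, h1⟩
  rcases h1 with ⟨y2, hy2, h1⟩
  rw [sat_and, sat_mem, sat_ex] at h1
  rcases h1 with ⟨m2, h1⟩
  rcases h1 with ⟨y3, hy3, h1⟩
  rw [sat_and, sat_mem, sat_ex] at h1
  rcases h1 with ⟨m3, h1⟩
  rcases h1 with ⟨y4, hy4, h1⟩
  rw [sat_and, sat_mem, sat_ex] at h1
  rcases h1 with ⟨m4, h1⟩
  rcases h1 with ⟨y5, hy5, h1⟩
  rw [sat_mem] at h1
  simp only [Function.update_apply, eq_self_iff_true, if_true, if_false,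
    e12, e13, e14, e15, e16, e23, e24, e25, e26, e34, e35, e36, e45, e46,
    e56] at m1 m2 m3 m4 h1
  have c1 : succ (rank x) ≤ rank y1 := succ_le_of_lt (ZFSet.rank_lt_of_mem m1)
  have c2 : succ (succ (rank x)) ≤ rank y2 :=
    (succ_le_succ c1).trans (succ_le_of_lt (ZFSet.rank_lt_of_mem m2))
  have c3 : succ (succ (succ (rank x))) ≤ rank y3 :=
    (succ_le_succ c2).trans (succ_le_of_lt (ZFSet.rank_lt_of_mem m3))
  have c4 : succ (succ (succ (succ (rank x)))) ≤ rank y4 :=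
    (succ_le_succ c3).trans (succ_le_of_lt (ZFSet.rank_lt_of_mem m4))
  have c5 : succ (succ (succ (succ (succ (rank x))))) ≤ rank y5 :=
    (succ_le_succ c4).trans (succ_le_of_lt (ZFSet.rank_lt_of_mem h1))
  exact lt_of_le_of_lt c5 hy5

lemma cl5_of_goodV {β : Ordinal.{u}} {v : ℕ → ZFSet.{u}} {n : ℕ} (hG : GoodV β) :
    Sat ∅ (· ∈ ·) (Vclass β) (cl5F n) v := by
  have e12 : n+1 ≠ n+2 := by omega
  have e13 : n+1 ≠ n+3 := by omega
  have e14 : n+1 ≠ n+4 := by omega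
  have e15 : n+1 ≠ n+5 := by omega
  have e16 : n+1 ≠ n+6 := by omega
  have e23 : n+2 ≠ n+3 := by omega
  have e24 : n+2 ≠ n+4 := by omega
  have e25 : n+2 ≠ n+5 := by omega
  have e26 : n+2 ≠ n+6 := by omega
  have e34 : n+3 ≠ n+4 := by omega
  have e35 : n+3 ≠ n+5 := by omega
  have e36 : n+3 ≠ n+6 := by omega
  have e45 : n+4 ≠ n+5 := by omega
  have e46 : n+4 ≠ n+6 := by omega
  have e56 : n+5 ≠ n+6 := by omega
  rw [cl5F, sat_all]
  intro x hx
  have hr5 := hG x hx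
  have m1 : ({x} : ZFSet.{u}) ∈ Vclass β := by
    rw [mem_Vclass, ZFSet.rank_singleton]
    refine lt_of_le_of_lt ?_ hr5
    exact succ_le_succ ((le_succ _).trans ((le_succ _).trans ((le_succ _).trans (le_succ _))))
  have m2 : ({({x} : ZFSet.{u})} : ZFSet.{u}) ∈ Vclass β := by
    rw [mem_Vclass, ZFSet.rank_singleton, ZFSet.rank_singleton]
    refine lt_of_le_of_lt ?_ hr5
    exact succ_le_succ (succ_le_succ ((le_succ _).trans ((le_succ _).trans (le_succ _))))
  have m3 : ({({({x} : ZFSet.{u})} : ZFSet.{u})} : ZFSet.{u}) ∈ Vclass β := by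
    rw [mem_Vclass, ZFSet.rank_singleton, ZFSet.rank_singleton, ZFSet.rank_singleton]
    refine lt_of_le_of_lt ?_ hr5
    exact succ_le_succ (succ_le_succ (succ_le_succ ((le_succ _).trans (le_succ _))))
  have m4 : ({({({({x} : ZFSet.{u})} : ZFSet.{u})} : ZFSet.{u})} : ZFSet.{u}) ∈ Vclass β := by
    rw [mem_Vclass, ZFSet.rank_singleton, ZFSet.rank_singleton, ZFSet.rank_singleton,
      ZFSet.rank_singleton]
    refine lt_of_le_of_lt ?_ hr5
    exact succ_le_succ (succ_le_succ (succ_le_succ (succ_le_succ (le_succ _))))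
  have m5 : ({({({({({x} : ZFSet.{u})} : ZFSet.{u})} : ZFSet.{u})} : ZFSet.{u})} : ZFSet.{u})
      ∈ Vclass β := by
    rw [mem_Vclass, ZFSet.rank_singleton, ZFSet.rank_singleton, ZFSet.rank_singleton,
      ZFSet.rank_singleton, ZFSet.rank_singleton]
    exact hr5
  rw [sat_ex]
  refine ⟨{x}, m1, ?_⟩
  rw [sat_and, sat_mem, sat_ex]
  refine ⟨?_, {({x} : ZFSet.{u})}, m2, ?_⟩
  · simp only [Function.update_apply, eq_self_iff_true, if_true, if_false,
      e12]
    exact ZFSet.mem_singleton.2 rfl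
  rw [sat_and, sat_mem, sat_ex]
  refine ⟨?_, {({({x} : ZFSet.{u})} : ZFSet.{u})}, m3, ?_⟩
  · simp only [Function.update_apply, eq_self_iff_true, if_true, if_false,
      e23]
    exact ZFSet.mem_singleton.2 rfl
  rw [sat_and, sat_mem, sat_ex]
  refine ⟨?_, {({({({x} : ZFSet.{u})} : ZFSet.{u})} : ZFSet.{u})}, m4, ?_⟩
  · simp only [Function.update_apply, eq_self_iff_true, if_true, if_false,
      e34]
    exact ZFSet.mem_singleton.2 rfl
  rw [sat_and, sat_mem, sat_ex]
  refine ⟨?_, {({({({({x} : ZFSet.{u})} : ZFSet.{u})} : ZFSet.{u})} : ZFSet.{u})}, m5, ?_⟩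
  · simp only [Function.update_apply, eq_self_iff_true, if_true, if_false,
      e45]
    exact ZFSet.mem_singleton.2 rfl
  rw [sat_mem]
  simp only [Function.update_apply, eq_self_iff_true, if_true, if_false, e56]
  exact ZFSet.mem_singleton.2 rfl

/-- The master formula. -/
def PsiF (φ : SF) : SF :=
  SF.and (cl5F (max φ.vb 2)) (SF.and (clVF (max φ.vb 2 + 1)) (SF.and (cardF 1 (max φ.vb 2))
    (SF.ex (max φ.vb 2) (SF.and (cardF (max φ.vb 2) (max φ.vb 2))
      (SF.and (SF.mem 1 (max φ.vb 2)) (φ.relN (max φ.vb 2)))))))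

lemma fv_PsiF {φ : SF} (hfv : φ.fv ⊆ {0, 1}) : (PsiF φ).fv ⊆ {0, 1} := by
  intro i hi
  rw [PsiF, SF.fv, SF.fv, SF.fv] at hi
  rcases hi with hi | hi | hi | hi
  · exact absurd (fv_cl5F hi) (Set.notMem_empty i)
  · have := fv_clVF hi
    simp only [Set.mem_singleton_iff] at this
    simp only [Set.mem_insert_iff, Set.mem_singleton_iff]
    omega
  · have := fv_cardF hi
    simp only [Set.mem_singleton_iff] at this
    simp only [Set.mem_insert_iff, Set.mem_singleton_iff]
    omega
  · rw [SF.fv] at hi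
    obtain ⟨hi, hne⟩ := hi
    simp only [Set.mem_singleton_iff] at hne
    rcases hi with hi | hi | hi
    · have := fv_cardF hi
      simp only [Set.mem_singleton_iff] at this
      omega
    · simp [SF.fv] at hi
      simp only [Set.mem_insert_iff, Set.mem_singleton_iff]
      omega
    · rcases fv_relN φ _ hi with h | h
      · exact hfv h
      · simp only [Set.mem_singleton_iff] at h
        omega

end Psi

/-- Every shrewd cardinal is weakly shrewd. -/
theorem shrewd_weaklyShrewd (κ : ZFSet.{u}) (h : Shrewd κ) : WeaklyShrewd κ := by
  classical
  obtain ⟨hZC, hrefl⟩ := h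
  have hZO : ZOrd κ := hZC.1
  -- Tool A: ranks of elements of κ are unbounded below rank κ
  have toolA : ∀ x : ZFSet.{u}, ZFSet.rank x < ZFSet.rank κ →
      ∃ κ' ∈ κ, ZFSet.rank x < ZFSet.rank κ' := by
    intro x hx
    have hfv : (SF.ex 2 (SF.mem 2 0)).fv ⊆ {0, 1} := by
      intro i hi
      simp [SF.fv] at hi
      simp only [Set.mem_insert_iff, Set.mem_singleton_iff]
      omega
    have hsat : SatIn ∅ (Vclass (ZFSet.rank κ + ZFSet.rank (∅ : ZFSet.{u})))
        (SF.ex 2 (SF.mem 2 0)) (val2 ({x} : ZFSet.{u}) κ) := by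
      rw [SatIn, sat_ex]
      refine ⟨x, ?_, ?_⟩
      · rw [mem_Vclass, ZFSet.rank_empty, add_zero]
        exact hx
      · rw [sat_mem]
        simp [Function.update_apply, val2]
    rcases hrefl _ ∅ {x} hfv ZOrd_empty
      (fun y hy => by rw [ZFSet.mem_singleton] at hy; rw [hy]; exact hx) hsat
      with ⟨κ', α', hκ', hα', hs⟩
    rw [SatIn, sat_ex] at hs
    rcases hs with ⟨z, hzV, hz⟩
    rw [sat_mem] at hz
    have hz' : z ∈ Vres {x} κ' := by simpa [Function.update_apply, val2] using hz
    rw [Vres, ZFSet.mem_sep] at hz'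
    obtain ⟨hz1, hz2⟩ := hz'
    rw [ZFSet.mem_singleton] at hz1
    subst hz1
    exact ⟨κ', hκ', hz2⟩
  -- κ is nonempty
  have toolB : ∃ z, z ∈ κ := by
    have hfv : (SF.eq 0 0).fv ⊆ ({0, 1} : Set ℕ) := by
      intro i hi
      simp [SF.fv] at hi
      simp only [Set.mem_insert_iff, Set.mem_singleton_iff]
      omega
    have hsat : SatIn ∅ (Vclass (ZFSet.rank κ + ZFSet.rank (∅ : ZFSet.{u})))
        (SF.eq 0 0) (val2 (∅ : ZFSet.{u}) κ) := by
      rw [SatIn, sat_eq]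
    rcases hrefl _ ∅ ∅ hfv ZOrd_empty
      (fun y hy => absurd hy (ZFSet.notMem_empty y)) hsat with ⟨κ', α', hκ', hα', hs⟩
    exact ⟨κ', hκ'⟩
  have hzero : (∅ : ZFSet.{u}) ∈ κ := by
    obtain ⟨z0, hz0⟩ := toolB
    have hne : ZFSet.toSet κ |>.Nonempty := ⟨z0, hz0⟩
    have hmem := ZFSet.mem_wf.min_mem κ.toSet hne
    have heq : ZFSet.mem_wf.min κ.toSet hne = ∅ := by
      rw [ZFSet.eq_empty]
      intro y hy
      have hyκ : y ∈ κ := hZO.1.mem_trans hy hmem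
      exact ZFSet.mem_wf.not_lt_min κ.toSet hyκ hy
    rw [← heq]
    exact hmem
  have hsucc : ∀ x : ZFSet.{u}, x ∈ κ → insert x x ∈ κ := by
    intro x hxκ
    rcases toolA x (ZFSet.rank_lt_of_mem hxκ) with ⟨κ', hκ'κ, hrk⟩
    have hZκ' : ZOrd κ' := hZO.mem hκ'κ
    have hZsx : ZOrd (insert x x) := ZOrd_succZ (hZO.mem hxκ)
    rcases ZOrd.tri _ hZsx _ hZκ' with hm | he | hm
    · exact hZO.1.mem_trans hm hκ'κ
    · rwa [he]
    · rcases ZFSet.mem_insert_iff.1 hm with heq | hm'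
      · rw [heq] at hrk
        exact absurd hrk (lt_irrefl _)
      · exact absurd (lt_trans hrk (ZFSet.rank_lt_of_mem hm')) (lt_irrefl _)
  have hωsub : ZFSet.omega ⊆ κ := by
    intro x hx
    rcases mem_omega_ex hx with ⟨n, rfl⟩
    clear hx
    induction n with
    | zero => exact hzero
    | succ m IH => exact hsucc _ IH
  refine ⟨⟨hZC, hωsub⟩, ?_⟩
  intro φ θ A hfv hθC hκθ hAκ hsat
  have hN2 : 2 ≤ max φ.vb 2 := le_max_right _ _
  have hNvb : φ.vb ≤ max φ.vb 2 := le_max_left _ _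
  set N := max φ.vb 2 with hN
  have hZθ : ZOrd θ := hθC.1
  set β := ZFSet.rank κ + ZFSet.rank (alphaZ θ) with hβ
  have hβeq : β = (ZFSet.rank κ + ZFSet.rank θ) + Ordinal.omega0 := by
    rw [hβ, rank_alphaZ, add_assoc]
  have hG : GoodV β := by rw [hβeq]; exact goodV_of_base_omega
  have hθV : θ ∈ Vclass β := by
    rw [mem_Vclass, hβeq]
    calc ZFSet.rank θ ≤ ZFSet.rank κ + ZFSet.rank θ := le_add_self
    _ = (ZFSet.rank κ + ZFSet.rank θ) + 0 := (add_zero _).symm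
    _ < (ZFSet.rank κ + ZFSet.rank θ) + Ordinal.omega0 :=
        add_lt_add_right Ordinal.omega0_pos _
  have hκV : κ ∈ Vclass β := lt_trans (ZFSet.rank_lt_of_mem hκθ) hθV
  have hHsub : HSet θ ⊆ Vclass β := HSet_subset_Vclass hZθ hθV
  have hv1 : val2 A κ 1 = κ := by simp [val2]
  have hupdN : Function.update (val2 A κ) N θ N = θ := Function.update_self _ _ _
  have hupd1 : Function.update (val2 A κ) N θ 1 = κ := by
    rw [Function.update_of_ne (by omega)]
    exact hv1
  have topSat : SatIn ∅ (Vclass β) (PsiF φ) (val2 A κ) := by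
    rw [SatIn, PsiF, sat_and, sat_and, sat_and]
    refine ⟨cl5_of_goodV hG, ?_, ?_, ?_⟩
    · rw [sat_clVF (by omega), hv1]
      exact hκV
    · rw [sat_cardF hG (by omega) (by rw [hv1]; exact hκV), hv1]
      exact hZC
    · rw [sat_ex]
      refine ⟨θ, hθV, ?_⟩
      rw [sat_and, sat_and]
      refine ⟨?_, ?_, ?_⟩
      · rw [sat_cardF hG le_rfl (by rw [hupdN]; exact hθV), hupdN]
        exact hθC
      · rw [sat_mem, hupd1, hupdN]
        exact hκθ
      · rw [sat_relN hG φ N _ hNvb (by rw [hupdN]; exact hθV) (by rw [hupdN]; exact hHsub),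
          hupdN]
        exact (sat_congr φ (v := Function.update (val2 A κ) N θ) (w := val2 A κ)
          (fun i hi => Function.update_of_ne (by
            have := hfv hi
            simp only [Set.mem_insert_iff, Set.mem_singleton_iff] at this
            omega) _ _)).2 hsat
  rcases hrefl (PsiF φ) (alphaZ θ) A (fv_PsiF hfv) (ZOrd_alphaZ hZθ)
    (fun y hy => ZFSet.rank_lt_of_mem (hAκ hy)) topSat with ⟨κ₁, α₁, hκ₁, hα₁, hs⟩
  set β' := ZFSet.rank κ₁ + ZFSet.rank α₁ with hβ'
  set A₁ := Vres A κ₁ with hA₁def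
  rw [SatIn, PsiF, sat_and, sat_and, sat_and] at hs
  obtain ⟨hs5, hsV, hsC1, hsEx⟩ := hs
  have hG' : GoodV β' := goodV_of_cl5 hs5
  have hv1' : val2 A₁ κ₁ 1 = κ₁ := by simp [val2]
  have hκ₁V : κ₁ ∈ Vclass β' := by
    rw [sat_clVF (by omega), hv1'] at hsV
    exact hsV
  have hZκ₁ : ZCard κ₁ := by
    rw [sat_cardF hG' (by omega) (by rw [hv1']; exact hκ₁V), hv1'] at hsC1
    exact hsC1
  rw [sat_ex] at hsEx
  obtain ⟨θ₁, hθ₁V, hsex⟩ := hsEx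
  rw [sat_and, sat_and] at hsex
  obtain ⟨hsθC, hsmem, hsrel⟩ := hsex
  have hupdN' : Function.update (val2 A₁ κ₁) N θ₁ N = θ₁ := Function.update_self _ _ _
  have hupd1' : Function.update (val2 A₁ κ₁) N θ₁ 1 = κ₁ := by
    rw [Function.update_of_ne (by omega)]
    exact hv1'
  have hZθ₁ : ZCard θ₁ := by
    rw [sat_cardF hG' le_rfl (by rw [hupdN']; exact hθ₁V), hupdN'] at hsθC
    exact hsθC
  have hκθ₁ : κ₁ ∈ θ₁ := by
    rw [sat_mem, hupd1', hupdN'] at hsmem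
    exact hsmem
  have hHsub' : HSet θ₁ ⊆ Vclass β' := HSet_subset_Vclass hZθ₁.1 hθ₁V
  rw [sat_relN hG' φ N _ hNvb (by rw [hupdN']; exact hθ₁V) (by rw [hupdN']; exact hHsub'),
    hupdN'] at hsrel
  replace hsrel := (sat_congr φ (v := Function.update (val2 A₁ κ₁) N θ₁) (w := val2 A₁ κ₁)
    (fun i hi => Function.update_of_ne (by
      have := hfv hi
      simp only [Set.mem_insert_iff, Set.mem_singleton_iff] at this
      omega) _ _)).1 hsrel
  have hA₁ : A₁ = A ∩ κ₁ := by
    apply ZFSet.ext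
    intro y
    rw [hA₁def, Vres, ZFSet.mem_sep, ZFSet.mem_inter]
    constructor
    · rintro ⟨hyA, hylt⟩
      refine ⟨hyA, ?_⟩
      rw [ZOrd.mem_iff_rank_lt (hZO.mem (hAκ hyA)) (hZO.mem hκ₁)]
      exact hylt
    · rintro ⟨hyA, hymem⟩
      refine ⟨hyA, ?_⟩
      exact ZFSet.rank_lt_of_mem hymem
  refine ⟨κ₁, θ₁, hZκ₁, hZθ₁, hκθ₁, hκ₁, ?_⟩
  rw [SatIn, ← hA₁]
  exact hsrel
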